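/- arXiv:2605.23329 — 5 statements merged into one kernel-verified Lean document; each statement's English description precedes it below -/
import Mathlib

section
/- Let t ∈ F_q^{n+2} be defined by t_i = v_i^{-1} u_i α_i^{n+2-k} for 1 ≤ i ≤ n, t_{n+1} = δ − h₂(α) − η·h₅(α), and t_{n+2} = −h₁(α), where α = (α₁,…,αₙ). Then C = { (c₁, …, c_{n+2}, Σ_{i=1}^{n+2} t_i c_i) : (c₁,…,c_{n+2}) ∈ C₁ }; that is, C is the extended code of the punctured code C₁ with respect to the vector t. -/
open Finset

variable {F : Type*} [Field F]

/-- The complete homogeneous symmetric polynomial `h_r(β)` of degree `r`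
evaluated at `β = (β 1, …, β m)` (with `h_0 = 1`). -/
def hsymPoly {R : Type*} [CommSemiring R] {m : ℕ} (β : Fin m → R) (r : ℕ) : R :=
  ∑ d ∈ Finset.Nat.antidiagonalTuple m r, ∏ i, β i ^ d i

/-- `u i = ∏_{j ≠ i} (α i - α j)⁻¹`. -/
def uCoef {n : ℕ} (α : Fin n → F) (i : Fin n) : F :=
  ∏ j ∈ Finset.univ.erase i, (α i - α j)⁻¹

/-- The `i`-th coefficient of a tuple indexed by `Fin k`, with default value `0`. -/
def coeffOf {k : ℕ} (fc : Fin k → F) (i : ℕ) : F :=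
  if h : i < k then fc ⟨i, h⟩ else 0

/-- Evaluation at `x` of the twisted polynomial
`f(x) = ∑_{i=0}^{k-1} f_i x^i + η f_{k-1} x^{k+2}`. -/
def twEval {k : ℕ} (η : F) (fc : Fin k → F) (x : F) : F :=
  (∑ i : Fin k, fc i * x ^ (i : ℕ)) + η * coeffOf fc (k - 1) * x ^ (k + 2)

/-- The codeword of the extended twisted generalized Reed–Solomon code `C` of length `n+3`
associated to the coefficient tuple `fc`:
`(v₁ f(α₁), …, vₙ f(αₙ), f_{k-1}, f_{k-2}, f_{k-3} + δ f_{k-1})`. -/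
def Cword (n k : ℕ) (α v : Fin n → F) (η δ : F) (fc : Fin k → F) : Fin (n + 3) → F :=
  fun j =>
    if h : (j : ℕ) < n then v ⟨(j : ℕ), h⟩ * twEval η fc (α ⟨(j : ℕ), h⟩)
    else if (j : ℕ) = n then coeffOf fc (k - 1)
    else if (j : ℕ) = n + 1 then coeffOf fc (k - 2)
    else coeffOf fc (k - 3) + δ * coeffOf fc (k - 1)

/-- The extended twisted generalized Reed–Solomon code `C` of length `n+3`. -/
def Ccode (n k : ℕ) (α v : Fin n → F) (η δ : F) : Set (Fin (n + 3) → F) :=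
  Set.range (Cword n k α v η δ)

/-- The codeword of the punctured code `C₁` of length `n+2`:
`(v₁ f(α₁), …, vₙ f(αₙ), f_{k-1}, f_{k-2})`. -/
def C1word (n k : ℕ) (α v : Fin n → F) (η : F) (fc : Fin k → F) : Fin (n + 2) → F :=
  fun j =>
    if h : (j : ℕ) < n then v ⟨(j : ℕ), h⟩ * twEval η fc (α ⟨(j : ℕ), h⟩)
    else if (j : ℕ) = n then coeffOf fc (k - 1)
    else coeffOf fc (k - 2)

/-- The punctured extended twisted generalized Reed–Solomon code `C₁` of length `n+2`. -/
def C1code (n k : ℕ) (α v : Fin n → F) (η : F) : Set (Fin (n + 2) → F) :=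
  Set.range (C1word n k α v η)

/-- The extension vector `t ∈ F^{n+2}`: `t_i = v_i⁻¹ u_i α_i^{n+2-k}` for `1 ≤ i ≤ n`,
`t_{n+1} = δ - h₂(α) - η h₅(α)`, `t_{n+2} = -h₁(α)`. -/
def tvec (n k : ℕ) (α v : Fin n → F) (η δ : F) : Fin (n + 2) → F :=
  fun i =>
    if h : (i : ℕ) < n then
      (v ⟨(i : ℕ), h⟩)⁻¹ * uCoef α ⟨(i : ℕ), h⟩ * α ⟨(i : ℕ), h⟩ ^ (n + 2 - k)
    else if (i : ℕ) = n then δ - hsymPoly α 2 - η * hsymPoly α 5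
    else -hsymPoly α 1

section Aux
open Polynomial

lemma hsym_zero {R : Type*} [CommSemiring R] {m : ℕ} (β : Fin m → R) : hsymPoly β 0 = 1 := by
  have h : Finset.Nat.antidiagonalTuple m 0 = {0} := by
    ext d
    simp [Finset.Nat.mem_antidiagonalTuple, funext_iff, Finset.sum_eq_zero_iff]
  simp [hsymPoly, h]

lemma hsym_one_var {R : Type*} [CommSemiring R] (β : Fin 1 → R) (r : ℕ) :
    hsymPoly β r = β 0 ^ r := by
  have h : Finset.Nat.antidiagonalTuple 1 r = {![r]} := by
    ext d
    simp only [Finset.Nat.mem_antidiagonalTuple, Finset.mem_singleton, Fin.sum_univ_one]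
    constructor
    · intro hd; funext i; fin_cases i; simpa using hd
    · rintro rfl; simp
  simp [hsymPoly, h]

lemma hsym_rec {R : Type*} [CommSemiring R] {n : ℕ} (α : Fin (n + 1) → R) (s : ℕ) :
    hsymPoly α s = ∑ t ∈ range (s + 1), α 0 ^ t * hsymPoly (Fin.tail α) (s - t) := by
  unfold hsymPoly
  simp_rw [Finset.mul_sum]
  rw [Finset.sum_sigma']
  refine (Finset.sum_nbij' (fun p => Fin.cons p.1 p.2) (fun d => ⟨d 0, Fin.tail d⟩)
    ?_ ?_ ?_ ?_ ?_).symm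
  · rintro ⟨t, d⟩ hp
    simp only [Finset.mem_sigma, Finset.mem_range, Finset.Nat.mem_antidiagonalTuple] at hp
    rw [Finset.Nat.mem_antidiagonalTuple, Fin.sum_univ_succ]
    simp only [Fin.cons_zero, Fin.cons_succ]
    omega
  · intro d hd
    rw [Finset.Nat.mem_antidiagonalTuple, Fin.sum_univ_succ] at hd
    simp only [Finset.mem_sigma, Finset.mem_range, Finset.Nat.mem_antidiagonalTuple]
    constructor
    · omega
    · unfold Fin.tail; omega
  · rintro ⟨t, d⟩ hp
    simp only [Fin.cons_zero, Fin.tail_cons]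
  · intro d hd; exact Fin.cons_self_tail d
  · rintro ⟨t, d⟩ hp
    rw [Fin.prod_univ_succ]
    simp only [Fin.cons_zero, Fin.cons_succ]
    rfl

lemma coeff_basis {n : ℕ} (α : Fin n → F) (hα : Function.Injective α) (i : Fin n) :
    (Lagrange.basis Finset.univ α i).coeff (n - 1) = uCoef α i := by
  have hc : (#(Finset.univ : Finset (Fin n))) = n := by simp
  have hdeg : (Lagrange.basis Finset.univ α i).natDegree = n - 1 := by
    rw [Lagrange.natDegree_basis hα.injOn (mem_univ i), hc]
  rw [← hdeg, Polynomial.coeff_natDegree, Lagrange.basis, Polynomial.leadingCoeff_prod]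
  refine Finset.prod_congr rfl fun j hj => ?_
  have hne : α i ≠ α j := fun h => (Finset.mem_erase.mp hj).1.symm (hα h)
  rw [Lagrange.basisDivisor, Polynomial.leadingCoeff_mul, Polynomial.leadingCoeff_C,
    (Polynomial.monic_X_sub_C (α j)).leadingCoeff, mul_one]

lemma sum_u_pow_lt {n : ℕ} (α : Fin n → F) (hα : Function.Injective α) {r : ℕ} (hr : r < n) :
    ∑ i, uCoef α i * α i ^ r = if r = n - 1 then 1 else 0 := by
  have hc : (#(Finset.univ : Finset (Fin n))) = n := by simp
  have hdeg : ((X : F[X]) ^ r).degree < (#(Finset.univ : Finset (Fin n)) : ℕ) := by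
    rw [Polynomial.degree_X_pow, hc]
    exact_mod_cast hr
  have h := (Lagrange.eq_interpolate (f := (X : F[X]) ^ r) hα.injOn hdeg)
  have h2 := congrArg (fun p => Polynomial.coeff p (n - 1)) h
  simp only [Lagrange.interpolate_apply, Polynomial.finset_sum_coeff,
    Polynomial.coeff_C_mul, Polynomial.eval_pow, Polynomial.eval_X,
    Polynomial.coeff_X_pow] at h2
  have h3 : ∑ i, uCoef α i * α i ^ r = ∑ x, α x ^ r * (Lagrange.basis univ α x).coeff (n-1) :=
    Finset.sum_congr rfl fun i _ => by rw [coeff_basis α hα i, mul_comm]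
  rw [h3, ← h2]
  simp [eq_comm]

lemma erase_succ_eq {n : ℕ} (j : Fin n) :
    (Finset.univ.erase j.succ : Finset (Fin (n + 1))) =
      insert 0 ((Finset.univ.erase j).image Fin.succ) := by
  ext x
  induction x using Fin.cases with
  | zero => simp [(Fin.succ_ne_zero j).symm]
  | succ y =>
    simp only [Finset.mem_erase, Finset.mem_univ, and_true, Finset.mem_insert,
      Finset.mem_image]
    constructor
    · intro hy
      right
      exact ⟨y, by simpa [Fin.succ_inj] using hy, rfl⟩
    · rintro (h | ⟨z, hz, hzy⟩)
      · exact absurd h.symm (Fin.succ_ne_zero y).symm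
      · have : z = y := Fin.succ_injective _ hzy
        subst this
        simpa [Fin.succ_inj] using hz

lemma uCoef_succ {n : ℕ} (α : Fin (n + 1) → F) (j : Fin n) :
    uCoef α j.succ = (α j.succ - α 0)⁻¹ * uCoef (Fin.tail α) j := by
  unfold uCoef
  rw [erase_succ_eq, Finset.prod_insert, Finset.prod_image]
  · rfl
  · intro a _ b _ h; exact Fin.succ_injective _ h
  · simp [Finset.mem_image, Fin.succ_ne_zero, eq_comm]

lemma sum_u_recurrence {n : ℕ} (α : Fin (n + 1) → F) (hα : Function.Injective α) (r : ℕ) :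
    ∑ i, uCoef α i * α i ^ r =
      (∑ t ∈ range r, (α 0) ^ (r - 1 - t) * ∑ j, uCoef (Fin.tail α) j * (Fin.tail α j) ^ t)
        + α 0 ^ r * ∑ i, uCoef α i := by
  rw [Fin.sum_univ_succ (f := fun i => uCoef α i * α i ^ r),
      Fin.sum_univ_succ (f := fun i => uCoef α i)]
  have key : ∀ j : Fin n, uCoef α j.succ * α j.succ ^ r =
      uCoef (Fin.tail α) j * (∑ t ∈ range r, α j.succ ^ t * α 0 ^ (r - 1 - t))
        + α 0 ^ r * uCoef α j.succ := by
    intro j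
    have hne : α j.succ - α 0 ≠ 0 := sub_ne_zero.mpr (fun h => by
      exact Fin.succ_ne_zero j (hα h))
    have hgeom : α j.succ ^ r =
        (∑ t ∈ range r, α j.succ ^ t * α 0 ^ (r - 1 - t)) * (α j.succ - α 0) + α 0 ^ r := by
      rw [geom_sum₂_mul]; ring
    rw [uCoef_succ α j, hgeom]
    field_simp
  rw [Finset.sum_congr rfl (fun j _ => key j)]
  rw [Finset.sum_add_distrib, ← Finset.mul_sum]
  have hsw : (∑ x : Fin n, uCoef (Fin.tail α) x * ∑ t ∈ range r, α x.succ ^ t * α 0 ^ (r - 1 - t))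
      = ∑ t ∈ range r, α 0 ^ (r - 1 - t) * ∑ j : Fin n, uCoef (Fin.tail α) j * Fin.tail α j ^ t := by
    simp_rw [Finset.mul_sum]
    rw [Finset.sum_comm]
    refine Finset.sum_congr rfl fun t _ => Finset.sum_congr rfl fun x _ => ?_
    simp only [Fin.tail]
    ring
  rw [hsw]
  ring

lemma sum_u_pow_aux : ∀ (m : ℕ) (α : Fin (m + 1) → F), Function.Injective α →
    ∀ s : ℕ, ∑ i, uCoef α i * α i ^ (m + s) = hsymPoly α s := by
  intro m
  induction m with
  | zero =>
    intro α hα s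
    have he : (Finset.univ.erase (0 : Fin 1)) = ∅ := by
      ext x; fin_cases x; simp
    simp [uCoef, he, hsym_one_var, Fin.sum_univ_one]
  | succ m ih =>
    intro α hα s
    set β : Fin (m + 1) → F := Fin.tail α with hβdef
    have hβ : Function.Injective β := fun a b h => Fin.succ_injective _ (hα h)
    have h0 : ∑ i, uCoef α i = 0 := by
      have h := sum_u_pow_lt α hα (r := 0) (by omega)
      simpa using h
    rw [sum_u_recurrence α hα, h0, mul_zero, add_zero]
    have hm1s : m + 1 + s - 1 = m + s := by omega
    have hsplit : ∑ t ∈ range (m + 1 + s), α 0 ^ (m + 1 + s - 1 - t) * ∑ j, uCoef β j * β j ^ t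
        = ∑ w ∈ range (s + 1), α 0 ^ (s - w) * hsymPoly β w := by
      rw [Finset.range_eq_Ico,
        ← Finset.sum_Ico_consecutive _ (Nat.zero_le m) (by omega : m ≤ m + 1 + s)]
      have hz : ∑ t ∈ Finset.Ico 0 m, α 0 ^ (m + 1 + s - 1 - t) * ∑ j, uCoef β j * β j ^ t = 0 := by
        refine Finset.sum_eq_zero fun t ht => ?_
        rw [Finset.mem_Ico] at ht
        have := sum_u_pow_lt β hβ (r := t) (by omega)
        rw [this, if_neg (by omega)]
        ring
      rw [hz, zero_add, Finset.sum_Ico_eq_sum_range]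
      have hlen : m + 1 + s - m = s + 1 := by omega
      rw [hlen]
      refine Finset.sum_congr rfl fun w hw => ?_
      rw [Finset.mem_range] at hw
      have he1 : m + 1 + s - 1 - (m + w) = s - w := by omega
      rw [he1, ih β hβ w]
    rw [hsplit, hsym_rec α s]
    rw [← Finset.sum_range_reflect (fun t => α 0 ^ t * hsymPoly (Fin.tail α) (s - t)) (s + 1)]
    refine Finset.sum_congr rfl fun w hw => ?_
    rw [Finset.mem_range] at hw
    have : s + 1 - 1 - w = s - w := by omega
    rw [this]
    have : s - (s - w) = w := by omega
    rw [this]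

lemma sum_u_pow {n : ℕ} (hn : 1 ≤ n) (α : Fin n → F) (hα : Function.Injective α) (s : ℕ) :
    ∑ i, uCoef α i * α i ^ (n - 1 + s) = hsymPoly α s := by
  obtain ⟨m, rfl⟩ : ∃ m, n = m + 1 := ⟨n - 1, by omega⟩
  have : m + 1 - 1 + s = m + s := by omega
  rw [this]
  exact sum_u_pow_aux m α hα s

lemma coeffOf_eq {k : ℕ} (fc : Fin k → F) (i : ℕ) (h : i < k) :
    coeffOf fc i = fc ⟨i, h⟩ := dif_pos h

lemma key_sum {n k : ℕ} (hk3 : 3 ≤ k) (hkn : k ≤ n) (α v : Fin n → F)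
    (hα : Function.Injective α) (hv : ∀ i, v i ≠ 0) (η δ : F) (fc : Fin k → F) :
    ∑ i : Fin (n + 2), tvec n k α v η δ i * C1word n k α v η fc i
      = coeffOf fc (k - 3) + δ * coeffOf fc (k - 1) := by
  have hn1 : 1 ≤ n := by omega
  set a : Fin k := ⟨k - 3, by omega⟩ with ha
  set b : Fin k := ⟨k - 2, by omega⟩ with hb
  set c : Fin k := ⟨k - 1, by omega⟩ with hc
  rw [Fin.sum_univ_castSucc, Fin.sum_univ_castSucc]
  -- last two coordinates
  have hlast : tvec n k α v η δ (Fin.last (n + 1)) * C1word n k α v η fc (Fin.last (n + 1))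
      = -hsymPoly α 1 * coeffOf fc (k - 2) := by
    simp only [tvec, C1word, Fin.val_last]
    rw [dif_neg (by omega), dif_neg (by omega), if_neg (by omega), if_neg (by omega)]
  have hmid : tvec n k α v η δ ((Fin.last n).castSucc) * C1word n k α v η fc ((Fin.last n).castSucc)
      = (δ - hsymPoly α 2 - η * hsymPoly α 5) * coeffOf fc (k - 1) := by
    simp only [tvec, C1word, Fin.coe_castSucc, Fin.val_last]
    rw [dif_neg (by omega), dif_neg (by omega)]
    norm_num
  rw [hlast, hmid]
  -- the main part
  have hmain : ∑ i : Fin n,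
      tvec n k α v η δ (i.castSucc.castSucc) * C1word n k α v η fc (i.castSucc.castSucc)
      = ∑ i : Fin n, uCoef α i * (α i ^ (n + 2 - k) * twEval η fc (α i)) := by
    refine Finset.sum_congr rfl fun i _ => ?_
    have hi : ((i.castSucc.castSucc : Fin (n + 2)) : ℕ) < n := by simp
    simp only [tvec, C1word, dif_pos hi]
    have : (⟨((i.castSucc.castSucc : Fin (n + 2)) : ℕ), hi⟩ : Fin n) = i := by
      ext; simp
    rw [this]
    have hvi := hv i
    field_simp
  rw [hmain]
  -- expand twEval
  have hexp : ∀ i : Fin n, uCoef α i * (α i ^ (n + 2 - k) * twEval η fc (α i))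
      = (∑ j : Fin k, fc j * (uCoef α i * α i ^ (n + 2 - k + (j : ℕ))))
        + η * coeffOf fc (k - 1) * (uCoef α i * α i ^ (n + 2 - k + (k + 2))) := by
    intro i
    simp only [twEval, mul_add, add_mul, Finset.mul_sum]
    congr 1
    · refine Finset.sum_congr rfl fun j _ => ?_
      rw [pow_add]; ring
    · rw [pow_add]; ring
  rw [Finset.sum_congr rfl fun i _ => hexp i, Finset.sum_add_distrib, Finset.sum_comm]
  simp_rw [← Finset.mul_sum]
  -- evaluate the twist sum
  have htw : ∑ i : Fin n, uCoef α i * α i ^ (n + 2 - k + (k + 2)) = hsymPoly α 5 := by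
    have : n + 2 - k + (k + 2) = n - 1 + 5 := by omega
    rw [this, sum_u_pow hn1 α hα 5]
  rw [htw]
  -- evaluate the regular sums
  have hS : ∀ j : Fin k, (∑ i, uCoef α i * α i ^ (n + 2 - k + (j : ℕ)))
      = (if j = c then hsymPoly α 2 else if j = b then hsymPoly α 1
          else if j = a then 1 else 0) := by
    intro j
    have hjk : (j : ℕ) < k := j.isLt
    by_cases h1 : j = c
    · have he : n + 2 - k + (j : ℕ) = n - 1 + 2 := by
        have : (j : ℕ) = k - 1 := by rw [h1]
        omega
      rw [he, sum_u_pow hn1 α hα 2, if_pos h1]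
    by_cases h2 : j = b
    · have he : n + 2 - k + (j : ℕ) = n - 1 + 1 := by
        have : (j : ℕ) = k - 2 := by rw [h2]
        omega
      rw [he, sum_u_pow hn1 α hα 1, if_neg h1, if_pos h2]
    by_cases h3 : j = a
    · have he : n + 2 - k + (j : ℕ) = n - 1 + 0 := by
        have : (j : ℕ) = k - 3 := by rw [h3]
        omega
      rw [he, sum_u_pow hn1 α hα 0, hsym_zero, if_neg h1, if_neg h2, if_pos h3]
    · have hj3 : (j : ℕ) < k - 3 := by
        have e1 : (j : ℕ) ≠ k - 1 := fun h => h1 (by ext; exact h)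
        have e2 : (j : ℕ) ≠ k - 2 := fun h => h2 (by ext; exact h)
        have e3 : (j : ℕ) ≠ k - 3 := fun h => h3 (by ext; exact h)
        omega
      have := sum_u_pow_lt α hα (r := n + 2 - k + (j : ℕ)) (by omega)
      rw [this, if_neg (by omega), if_neg h1, if_neg h2, if_neg h3]
  rw [Finset.sum_congr rfl fun j _ => by rw [hS j]]
  -- collapse the ite sum
  have hcollapse : ∑ j : Fin k, fc j * (if j = c then hsymPoly α 2 else if j = b then hsymPoly α 1
      else if j = a then 1 else 0)
      = fc a + hsymPoly α 1 * fc b + hsymPoly α 2 * fc c := by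
    have hab : a ≠ b := by simp [ha, hb, Fin.ext_iff]; omega
    have hac : a ≠ c := by simp [ha, hc, Fin.ext_iff]; omega
    have hbc : b ≠ c := by simp [hb, hc, Fin.ext_iff]; omega
    have hpt : ∀ j : Fin k, fc j * (if j = c then hsymPoly α 2 else if j = b then hsymPoly α 1
        else if j = a then 1 else 0)
        = (if j = c then hsymPoly α 2 * fc j else 0) + (if j = b then hsymPoly α 1 * fc j else 0)
          + (if j = a then fc j else 0) := by
      intro j
      by_cases h1 : j = c
      · subst h1; rw [if_pos rfl, if_pos rfl, if_neg hbc.symm, if_neg hac.symm]; ring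
      by_cases h2 : j = b
      · subst h2; rw [if_neg h1, if_pos rfl, if_neg h1, if_pos rfl, if_neg hab.symm]; ring
      by_cases h3 : j = a
      · subst h3; rw [if_neg h1, if_neg h2, if_pos rfl, if_neg h1, if_neg h2, if_pos rfl]; ring
      · rw [if_neg h1, if_neg h2, if_neg h3, if_neg h1, if_neg h2, if_neg h3]; ring
    rw [Finset.sum_congr rfl fun j _ => hpt j, Finset.sum_add_distrib, Finset.sum_add_distrib,
      Finset.sum_ite_eq' Finset.univ c, Finset.sum_ite_eq' Finset.univ b,
      Finset.sum_ite_eq' Finset.univ a]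
    simp only [Finset.mem_univ, if_pos]
    ring
  rw [hcollapse]
  have e1 : coeffOf fc (k - 1) = fc c := coeffOf_eq fc (k - 1) (by omega)
  have e2 : coeffOf fc (k - 2) = fc b := coeffOf_eq fc (k - 2) (by omega)
  have e3 : coeffOf fc (k - 3) = fc a := coeffOf_eq fc (k - 3) (by omega)
  rw [e1, e2, e3]
  ring

lemma snoc_word {n k : ℕ} (hk3 : 3 ≤ k) (hkn : k ≤ n) (α v : Fin n → F)
    (hα : Function.Injective α) (hv : ∀ i, v i ≠ 0) (η δ : F) (fc : Fin k → F) :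
    (Fin.snoc (C1word n k α v η fc)
        (∑ i : Fin (n + 2), tvec n k α v η δ i * C1word n k α v η fc i) : Fin (n + 3) → F)
      = Cword n k α v η δ fc := by
  rw [key_sum hk3 hkn α v hα hv η δ fc]
  funext j
  induction j using Fin.lastCases with
  | last =>
    rw [Fin.snoc_last]
    simp only [Cword, Fin.val_last]
    rw [dif_neg (by omega), if_neg (by omega), if_neg (by omega)]
  | cast j =>
    rw [Fin.snoc_castSucc]
    simp only [Cword, C1word, Fin.coe_castSucc]
    by_cases h : (j : ℕ) < n
    · rw [dif_pos h, dif_pos h]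
    · rw [dif_neg h, dif_neg h]
      by_cases h2 : (j : ℕ) = n
      · rw [if_pos h2, if_pos h2]
      · have h3 : (j : ℕ) = n + 1 := by omega
        rw [if_neg h2, if_neg h2, if_pos h3]

end Aux

/-- `C` is the extended code of the punctured code `C₁` with respect to the vector `t`:
`C = { (c₁, …, c_{n+2}, ∑ᵢ tᵢ cᵢ) : c ∈ C₁ }`. -/
theorem Ccode_eq_extended_C1code {F : Type*} [Field F] [Fintype F]
    (n k : ℕ) (hk3 : 3 ≤ k) (hkn : k ≤ n) (hnq : n ≤ Fintype.card F)
    (α v : Fin n → F) (hα : Function.Injective α) (hv : ∀ i, v i ≠ 0)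
    (η δ : F) (hη : η ≠ 0) :
    Ccode n k α v η δ =
      (fun c : Fin (n + 2) → F =>
        (Fin.snoc c (∑ i : Fin (n + 2), tvec n k α v η δ i * c i) : Fin (n + 3) → F)) ''
        C1code n k α v η := by
  ext x
  simp only [Ccode, C1code, Set.mem_range, Set.mem_image]
  constructor
  · rintro ⟨fc, rfl⟩
    exact ⟨C1word n k α v η fc, ⟨fc, rfl⟩, snoc_word hk3 hkn α v hα hv η δ fc⟩
  · rintro ⟨y, ⟨fc, rfl⟩, rfl⟩
    exact ⟨fc, (snoc_word hk3 hkn α v hα hv η δ fc).symm⟩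
end

section
/- If 3 ≤ k ≤ n − 4, then the code C is of non-GRS type: C is not monomially equivalent to any generalized Reed–Solomon code GRS_k(b, w) of length n+3 and dimension k over F_q. -/
open Finset

variable {F : Type*} [Field F]

/-- The generalized Reed–Solomon code `GRS_k(b, w)` of length `N`:
all words `(w₁ g(b₁), …, w_N g(b_N))` with `deg g < k`. -/
def GRScode (N k : ℕ) (b w : Fin N → F) : Set (Fin N → F) :=
  { c | ∃ g : Polynomial F, g.degree < (k : ℕ) ∧ ∀ i, c i = w i * Polynomial.eval (b i) g }

/-- Two codes of length `N` are monomially equivalent if a permutation of coordinates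
composed with multiplication by nonzero scalars maps one onto the other. -/
def MonomiallyEquivalent {N : ℕ} (D₁ D₂ : Set (Fin N → F)) : Prop :=
  ∃ (π : Equiv.Perm (Fin N)) (c : Fin N → F), (∀ i, c i ≠ 0) ∧
    (fun x : Fin N → F => fun i => c i * x (π i)) '' D₁ = D₂


open Polynomial

lemma aux_prod_dvd {F : Type*} [Field F] (s : Finset ℕ) (f : ℕ → F)
    (hinj : ∀ m₁ ∈ s, ∀ m₂ ∈ s, f m₁ = f m₂ → m₁ = m₂) :
    ∀ g : Polynomial F, (∀ m ∈ s, g.eval (f m) = 0) →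
      (∏ m ∈ s, (X - C (f m))) ∣ g := by
  classical
  induction s using Finset.induction_on with
  | empty => intro g _; simp only [Finset.prod_empty]; exact one_dvd g
  | @insert a s ha ih =>
    intro g hroot
    obtain ⟨g₁, rfl⟩ := (dvd_iff_isRoot.mpr (hroot a (Finset.mem_insert_self a s)))
    rw [Finset.prod_insert ha]
    refine mul_dvd_mul_left _ (ih (fun m₁ h₁ m₂ h₂ =>
      hinj m₁ (Finset.mem_insert_of_mem h₁) m₂ (Finset.mem_insert_of_mem h₂)) g₁ ?_)
    intro m hm
    have h0 := hroot m (Finset.mem_insert_of_mem hm)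
    rw [eval_mul, eval_sub, eval_X, eval_C] at h0
    have hne : f m - f a ≠ 0 := sub_ne_zero.mpr (fun h => ha (by
      rwa [hinj m (Finset.mem_insert_of_mem hm) a (Finset.mem_insert_self a s) h] at hm))
    exact (mul_eq_zero.mp h0).resolve_left hne

lemma aux_eq_C_mul_prod {F : Type*} [Field F] {g : Polynomial F} {k : ℕ}
    (hdeg : g.degree < (k : ℕ)) (hg : g ≠ 0) (s : Finset ℕ) (f : ℕ → F)
    (hinj : ∀ m₁ ∈ s, ∀ m₂ ∈ s, f m₁ = f m₂ → m₁ = m₂)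
    (hroot : ∀ m ∈ s, g.eval (f m) = 0) (hcard : s.card + 1 = k) :
    ∃ t : F, t ≠ 0 ∧ g = C t * ∏ m ∈ s, (X - C (f m)) := by
  obtain ⟨u, hu⟩ := aux_prod_dvd s f hinj g hroot
  have hQm : (∏ m ∈ s, (X - C (f m))).Monic :=
    monic_prod_of_monic _ _ fun m _ => monic_X_sub_C (f m)
  have hQd : (∏ m ∈ s, (X - C (f m))).natDegree = s.card := by
    rw [natDegree_prod_of_monic _ _ fun m _ => monic_X_sub_C (f m)]
    simp
  have hu0 : u ≠ 0 := by rintro rfl; rw [mul_zero] at hu; exact hg hu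
  have hnd : g.natDegree < k := (natDegree_lt_iff_degree_lt hg).mpr hdeg
  have hsum : g.natDegree = s.card + u.natDegree := by
    rw [hu, natDegree_mul hQm.ne_zero hu0, hQd]
  have hnu : u.natDegree = 0 := by omega
  have hC := eq_C_of_natDegree_eq_zero hnu
  refine ⟨u.coeff 0, ?_, by rw [hu, ← hC]; exact mul_comm _ _⟩
  intro h0
  rw [h0, map_zero] at hC
  exact hu0 hC

lemma aux_twEval_eq {F : Type*} [Field F] {k : ℕ} (hk : 3 ≤ k) (η : F)
    (G : Polynomial F) (hdeg : G.natDegree < k + 3)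
    (h0 : G.coeff k = 0) (h1 : G.coeff (k + 1) = 0)
    (h2 : G.coeff (k + 2) = η * G.coeff (k - 1)) (x : F) :
    twEval η (fun i : Fin k => G.coeff (i : ℕ)) x = G.eval x := by
  have hk1 : k - 1 < k := by omega
  rw [eval_eq_sum_range' hdeg x]
  have hsplit : ∑ i ∈ Finset.range (k + 3), G.coeff i * x ^ i
      = (∑ i ∈ Finset.range k, G.coeff i * x ^ i) + G.coeff (k + 2) * x ^ (k + 2) := by
    rw [show k + 3 = (k + 2) + 1 from rfl, Finset.sum_range_succ,
      show k + 2 = (k + 1) + 1 from rfl, Finset.sum_range_succ,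
      Finset.sum_range_succ, h0, h1]
    ring
  rw [hsplit, twEval, Fin.sum_univ_eq_sum_range (fun i => G.coeff i * x ^ i) k,
    coeffOf, dif_pos hk1]
  show _ + η * G.coeff (k-1) * x ^ (k+2) = _
  rw [← h2]

/-- For `3 ≤ k ≤ n - 4`, the extended twisted generalized Reed–Solomon code `C` is of non-GRS
type: it is not monomially equivalent to any generalized Reed–Solomon code of length `n+3` and
dimension `k`. -/
theorem Ccode_not_GRS {F : Type*} [Field F] [Fintype F]
    (n k : ℕ) (hk3 : 3 ≤ k) (hkn : k + 4 ≤ n) (hnq : n ≤ Fintype.card F)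
    (α v : Fin n → F) (hα : Function.Injective α) (hv : ∀ i, v i ≠ 0)
    (η δ : F) (hη : η ≠ 0) :
    ¬ ∃ b w : Fin (n + 3) → F, Function.Injective b ∧ (∀ i, w i ≠ 0) ∧
        MonomiallyEquivalent (Ccode n k α v η δ) (GRScode (n + 3) k b w) := by
  classical
  rintro ⟨b, w, hb, hw, π, c, hc, himg⟩
  have hk2n : k - 2 < n := by omega
  have hk3n : k - 3 < n := by omega
  -- evaluation points, and the images of the GRS points under the coordinate matching
  set αn : ℕ → F := fun m => if h : m < n then α ⟨m, h⟩ else 0 with hαn_def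
  set βn : ℕ → F := fun m => if h : m < n + 3 then b (π.symm ⟨m, h⟩) else 0 with hβn_def
  have hαinj : ∀ m₁, m₁ < n → ∀ m₂, m₂ < n → αn m₁ = αn m₂ → m₁ = m₂ := by
    intro m₁ h₁ m₂ h₂ he
    simp only [hαn_def, dif_pos h₁, dif_pos h₂] at he
    exact Fin.mk.inj_iff.mp (hα he)
  have hβinj : ∀ m₁, m₁ < n + 3 → ∀ m₂, m₂ < n + 3 → βn m₁ = βn m₂ → m₁ = m₂ := by
    intro m₁ h₁ m₂ h₂ he
    simp only [hβn_def, dif_pos h₁, dif_pos h₂] at he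
    exact Fin.mk.inj_iff.mp (π.symm.injective (hb he))
  -- the polynomials underlying four special codewords
  set PA : Polynomial F := ∏ m ∈ Finset.range (k - 3), (X - C (αn m)) with hPA_def
  set Qa : Polynomial F := PA * (X - C (αn (k - 3))) with hQa_def
  set Qb : Polynomial F := PA * (X - C (αn (k - 2))) with hQb_def
  set p : Polynomial F := C η * X ^ (k + 2) + X ^ (k - 1) with hp_def
  set Ra : Polynomial F := p /ₘ Qa with hRa_def
  set Rb : Polynomial F := p /ₘ Qb with hRb_def
  set Fya : Polynomial F := Qa * Ra with hFya_def
  set Fyb : Polynomial F := Qb * Rb with hFyb_def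
  have hPAm : PA.Monic := monic_prod_of_monic _ _ fun m _ => monic_X_sub_C _
  have hPAd : PA.natDegree = k - 3 := by
    rw [hPA_def, natDegree_prod_of_monic _ _ fun m _ => monic_X_sub_C _]
    simp [natDegree_X_sub_C]
  have hQam : Qa.Monic := hPAm.mul (monic_X_sub_C _)
  have hQbm : Qb.Monic := hPAm.mul (monic_X_sub_C _)
  have hQad : Qa.natDegree = k - 2 := by
    rw [hQa_def, natDegree_mul hPAm.ne_zero (X_sub_C_ne_zero _), hPAd, natDegree_X_sub_C]
    omega
  have hQbd : Qb.natDegree = k - 2 := by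
    rw [hQb_def, natDegree_mul hPAm.ne_zero (X_sub_C_ne_zero _), hPAd, natDegree_X_sub_C]
    omega
  have hpc : ∀ i, p.coeff i = (if i = k + 2 then η else 0) + (if i = k - 1 then 1 else 0) := by
    intro i
    rw [hp_def, coeff_add, coeff_C_mul, coeff_X_pow, coeff_X_pow, mul_ite, mul_one, mul_zero]
  have hpc2 : p.coeff (k + 2) = η := by
    rw [hpc (k + 2), if_pos rfl, if_neg (by omega), add_zero]
  have hpck1 : p.coeff (k - 1) = 1 := by
    rw [hpc (k - 1), if_neg (by omega), if_pos rfl, zero_add]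
  have hpc0 : ∀ i, i ≠ k + 2 → i ≠ k - 1 → p.coeff i = 0 := by
    intro i h1 h2
    rw [hpc i, if_neg h1, if_neg h2, add_zero]
  have hpd : p.natDegree = k + 2 := by
    refine le_antisymm ?_ (le_natDegree_of_ne_zero (by rw [hpc2]; exact hη))
    rw [hp_def]
    refine (natDegree_add_le _ _).trans ?_
    have h1 : (C η * X ^ (k + 2) : Polynomial F).natDegree ≤ k + 2 :=
      (natDegree_C_mul_le _ _).trans (by rw [natDegree_X_pow])
    have h2 : (X ^ (k - 1) : Polynomial F).natDegree ≤ k + 2 := by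
      rw [natDegree_X_pow]; omega
    exact max_le h1 h2
  have hRad : Ra.natDegree = 4 := by
    rw [hRa_def, natDegree_divByMonic p hQam, hpd, hQad]; omega
  have hRbd : Rb.natDegree = 4 := by
    rw [hRb_def, natDegree_divByMonic p hQbm, hpd, hQbd]; omega
  have hFya_eq : Fya = p - p %ₘ Qa := by
    rw [hFya_def, modByMonic_eq_sub_mul_div p Qa, ← hRa_def]; ring
  have hFyb_eq : Fyb = p - p %ₘ Qb := by
    rw [hFyb_def, modByMonic_eq_sub_mul_div p Qb, ← hRb_def]; ring
  have hrem_a : ∀ i, k - 2 ≤ i → (p %ₘ Qa).coeff i = 0 := by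
    intro i hi
    apply coeff_eq_zero_of_degree_lt
    refine lt_of_lt_of_le ?_ (by exact_mod_cast hi : ((k - 2 : ℕ) : WithBot ℕ) ≤ (i : ℕ))
    have h := degree_modByMonic_lt p hQam
    rwa [degree_eq_natDegree hQam.ne_zero, hQad] at h
  have hrem_b : ∀ i, k - 2 ≤ i → (p %ₘ Qb).coeff i = 0 := by
    intro i hi
    apply coeff_eq_zero_of_degree_lt
    refine lt_of_lt_of_le ?_ (by exact_mod_cast hi : ((k - 2 : ℕ) : WithBot ℕ) ≤ (i : ℕ))
    have h := degree_modByMonic_lt p hQbm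
    rwa [degree_eq_natDegree hQbm.ne_zero, hQbd] at h
  have hFyac : ∀ i, k - 2 ≤ i → Fya.coeff i = p.coeff i := by
    intro i hi; rw [hFya_eq, coeff_sub, hrem_a i hi, sub_zero]
  have hFybc : ∀ i, k - 2 ≤ i → Fyb.coeff i = p.coeff i := by
    intro i hi; rw [hFyb_eq, coeff_sub, hrem_b i hi, sub_zero]
  have hQa_hi : ∀ i, k - 2 < i → Qa.coeff i = 0 := fun i hi =>
    coeff_eq_zero_of_natDegree_lt (by rw [hQad]; exact hi)
  have hQb_hi : ∀ i, k - 2 < i → Qb.coeff i = 0 := fun i hi =>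
    coeff_eq_zero_of_natDegree_lt (by rw [hQbd]; exact hi)
  -- coefficient facts for the twisted polynomials
  have hFya_k : Fya.coeff k = 0 := by
    rw [hFyac k (by omega)]; exact hpc0 k (by omega) (by omega)
  have hFya_k1 : Fya.coeff (k + 1) = 0 := by
    rw [hFyac (k + 1) (by omega)]; exact hpc0 (k + 1) (by omega) (by omega)
  have hFya_k2 : Fya.coeff (k + 2) = η := by rw [hFyac (k + 2) (by omega)]; exact hpc2
  have hFya_km1 : Fya.coeff (k - 1) = 1 := by rw [hFyac (k - 1) (by omega)]; exact hpck1
  have hFya_km2 : Fya.coeff (k - 2) = 0 := by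
    rw [hFyac (k - 2) (by omega)]; exact hpc0 (k - 2) (by omega) (by omega)
  have hFyb_k : Fyb.coeff k = 0 := by
    rw [hFybc k (by omega)]; exact hpc0 k (by omega) (by omega)
  have hFyb_k1 : Fyb.coeff (k + 1) = 0 := by
    rw [hFybc (k + 1) (by omega)]; exact hpc0 (k + 1) (by omega) (by omega)
  have hFyb_k2 : Fyb.coeff (k + 2) = η := by rw [hFybc (k + 2) (by omega)]; exact hpc2
  have hFyb_km1 : Fyb.coeff (k - 1) = 1 := by rw [hFybc (k - 1) (by omega)]; exact hpck1
  have hFyb_km2 : Fyb.coeff (k - 2) = 0 := by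
    rw [hFybc (k - 2) (by omega)]; exact hpc0 (k - 2) (by omega) (by omega)
  have hFyadeg : Fya.natDegree < k + 3 := by
    have h := natDegree_mul_le (p := Qa) (q := Ra)
    rw [← hFya_def, hQad, hRad] at h
    omega
  have hFybdeg : Fyb.natDegree < k + 3 := by
    have h := natDegree_mul_le (p := Qb) (q := Rb)
    rw [← hFyb_def, hQbd, hRbd] at h
    omega
  -- leading coefficients of the quotients
  have hRac : Ra.coeff 4 = η := by
    have h := coeff_mul_degree_add_degree Qa Ra
    rw [← hFya_def, hQad, hRad, hQam.leadingCoeff, one_mul,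
      show k - 2 + 4 = k + 2 by omega, hFya_k2] at h
    rw [show (4 : ℕ) = Ra.natDegree from hRad.symm, coeff_natDegree]
    exact h.symm
  have hRbc : Rb.coeff 4 = η := by
    have h := coeff_mul_degree_add_degree Qb Rb
    rw [← hFyb_def, hQbd, hRbd, hQbm.leadingCoeff, one_mul,
      show k - 2 + 4 = k + 2 by omega, hFyb_k2] at h
    rw [show (4 : ℕ) = Rb.natDegree from hRbd.symm, coeff_natDegree]
    exact h.symm
  -- the codeword coefficient tuples
  set CW : (Fin k → F) → (Fin (n + 3) → F) := Cword n k α v η δ with hCW_def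
  set fXa : Fin k → F := fun i => Qa.coeff (i : ℕ) with hfXa_def
  set fXb : Fin k → F := fun i => Qb.coeff (i : ℕ) with hfXb_def
  set fYa : Fin k → F := fun i => Fya.coeff (i : ℕ) with hfYa_def
  set fYb : Fin k → F := fun i => Fyb.coeff (i : ℕ) with hfYb_def
  -- coordinates of codewords
  have hcoeffOf : ∀ (fc : Fin k → F) (G : Polynomial F),
      fc = (fun i : Fin k => G.coeff (i : ℕ)) → ∀ (i : ℕ), i < k → coeffOf fc i = G.coeff i := by
    intro fc G hfc i h
    rw [hfc]
    simp only [coeffOf, dif_pos h]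
  have hcoord : ∀ (G : Polynomial F) (fc : Fin k → F),
      fc = (fun i : Fin k => G.coeff (i : ℕ)) → G.natDegree < k + 3 → G.coeff k = 0 →
      G.coeff (k + 1) = 0 → G.coeff (k + 2) = η * G.coeff (k - 1) →
      ∀ (m : ℕ) (hm : m < n) (hm3 : m < n + 3),
      CW fc ⟨m, hm3⟩ = v ⟨m, hm⟩ * G.eval (αn m) := by
    intro G fc hfc h1 h2 h3 h4 m hm hm3
    rw [hfc, hCW_def]
    simp only [Cword]
    rw [dif_pos (show ((⟨m, hm3⟩ : Fin (n + 3)) : ℕ) < n from hm)]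
    rw [aux_twEval_eq hk3 η G h1 h2 h3 h4]
    have hval : αn m = α ⟨m, hm⟩ := by simp only [hαn_def]; rw [dif_pos hm]
    rw [hval]
  have hCw_n : ∀ fc : Fin k → F, ∀ h : n < n + 3, CW fc ⟨n, h⟩ = coeffOf fc (k - 1) := by
    intro fc h
    rw [hCW_def]
    simp only [Cword]
    rw [dif_neg (show ¬(n < n) by omega)]
    simp only [if_true]
  have hCw_n1 : ∀ fc : Fin k → F, ∀ h : n + 1 < n + 3, CW fc ⟨n + 1, h⟩ = coeffOf fc (k - 2) := by
    intro fc h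
    rw [hCW_def]
    simp only [Cword]
    rw [dif_neg (show ¬(n + 1 < n) by omega)]
    simp only [if_true]
    rw [if_neg (show ¬(n + 1 = n) by omega)]
  have hGQa := hcoord Qa fXa hfXa_def (by rw [hQad]; omega) (hQa_hi k (by omega))
    (hQa_hi (k + 1) (by omega))
    (by rw [hQa_hi (k + 2) (by omega), hQa_hi (k - 1) (by omega), mul_zero])
  have hGQb := hcoord Qb fXb hfXb_def (by rw [hQbd]; omega) (hQb_hi k (by omega))
    (hQb_hi (k + 1) (by omega))
    (by rw [hQb_hi (k + 2) (by omega), hQb_hi (k - 1) (by omega), mul_zero])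
  have hGFya := hcoord Fya fYa hfYa_def hFyadeg hFya_k hFya_k1
    (by rw [hFya_k2, hFya_km1, mul_one])
  have hGFyb := hcoord Fyb fYb hfYb_def hFybdeg hFyb_k hFyb_k1
    (by rw [hFyb_k2, hFyb_km1, mul_one])
  -- root sets
  set S1 : Finset ℕ := insert n (insert (k - 3) (Finset.range (k - 3))) with hS1_def
  set S2 : Finset ℕ := insert (n + 1) (insert (k - 2) (Finset.range (k - 3))) with hS2_def
  set S3 : Finset ℕ := insert n (insert (k - 2) (Finset.range (k - 3))) with hS3_def
  set S4 : Finset ℕ := insert (n + 1) (insert (k - 3) (Finset.range (k - 3))) with hS4_def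
  have hS1lt : ∀ m ∈ S1, m < n + 3 := by
    intro m hm; simp only [hS1_def, Finset.mem_insert, Finset.mem_range] at hm; omega
  have hS2lt : ∀ m ∈ S2, m < n + 3 := by
    intro m hm; simp only [hS2_def, Finset.mem_insert, Finset.mem_range] at hm; omega
  have hS3lt : ∀ m ∈ S3, m < n + 3 := by
    intro m hm; simp only [hS3_def, Finset.mem_insert, Finset.mem_range] at hm; omega
  have hS4lt : ∀ m ∈ S4, m < n + 3 := by
    intro m hm; simp only [hS4_def, Finset.mem_insert, Finset.mem_range] at hm; omega
  have h_in1 : (k - 3) ∉ Finset.range (k - 3) := by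
    simp only [Finset.mem_range]; omega
  have h_in2 : (k - 2) ∉ Finset.range (k - 3) := by
    simp only [Finset.mem_range]; omega
  have h_in3 : n ∉ insert (k - 3) (Finset.range (k - 3)) := by
    simp only [Finset.mem_insert, Finset.mem_range]; omega
  have h_in4 : n ∉ insert (k - 2) (Finset.range (k - 3)) := by
    simp only [Finset.mem_insert, Finset.mem_range]; omega
  have h_in5 : (n + 1) ∉ insert (k - 3) (Finset.range (k - 3)) := by
    simp only [Finset.mem_insert, Finset.mem_range]; omega
  have h_in6 : (n + 1) ∉ insert (k - 2) (Finset.range (k - 3)) := by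
    simp only [Finset.mem_insert, Finset.mem_range]; omega
  have hS1card : S1.card + 1 = k := by
    rw [hS1_def, Finset.card_insert_of_notMem h_in3, Finset.card_insert_of_notMem h_in1,
      Finset.card_range]
    omega
  have hS2card : S2.card + 1 = k := by
    rw [hS2_def, Finset.card_insert_of_notMem h_in6, Finset.card_insert_of_notMem h_in2,
      Finset.card_range]
    omega
  have hS3card : S3.card + 1 = k := by
    rw [hS3_def, Finset.card_insert_of_notMem h_in4, Finset.card_insert_of_notMem h_in2,
      Finset.card_range]
    omega
  have hS4card : S4.card + 1 = k := by
    rw [hS4_def, Finset.card_insert_of_notMem h_in5, Finset.card_insert_of_notMem h_in1,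
      Finset.card_range]
    omega
  -- roots of the polynomials
  have hPA_root : ∀ m ∈ Finset.range (k - 3), PA.eval (αn m) = 0 := by
    intro m hm
    rw [hPA_def, eval_prod]
    exact Finset.prod_eq_zero hm (by simp)
  have hQa_root : ∀ m ∈ insert (k - 3) (Finset.range (k - 3)), Qa.eval (αn m) = 0 := by
    intro m hm
    rcases Finset.mem_insert.mp hm with rfl | hm'
    · rw [hQa_def, eval_mul]; simp
    · rw [hQa_def, eval_mul, hPA_root m hm', zero_mul]
  have hQb_root : ∀ m ∈ insert (k - 2) (Finset.range (k - 3)), Qb.eval (αn m) = 0 := by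
    intro m hm
    rcases Finset.mem_insert.mp hm with rfl | hm'
    · rw [hQb_def, eval_mul]; simp
    · rw [hQb_def, eval_mul, hPA_root m hm', zero_mul]
  -- zero coordinates of the codewords
  have hXa_root : ∀ m ∈ S1, ∀ hm : m < n + 3, CW fXa ⟨m, hm⟩ = 0 := by
    intro m hmS hm
    rw [hS1_def] at hmS
    rcases Finset.mem_insert.mp hmS with rfl | hmS'
    · rw [hCw_n fXa hm, hcoeffOf fXa Qa hfXa_def (k - 1) (by omega)]
      exact hQa_hi (k - 1) (by omega)
    · have hmn : m < n := by
        rcases Finset.mem_insert.mp hmS' with rfl | h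
        · omega
        · have := Finset.mem_range.mp h; omega
      rw [hGQa m hmn hm, hQa_root m hmS', mul_zero]
  have hXb_root : ∀ m ∈ S3, ∀ hm : m < n + 3, CW fXb ⟨m, hm⟩ = 0 := by
    intro m hmS hm
    rw [hS3_def] at hmS
    rcases Finset.mem_insert.mp hmS with rfl | hmS'
    · rw [hCw_n fXb hm, hcoeffOf fXb Qb hfXb_def (k - 1) (by omega)]
      exact hQb_hi (k - 1) (by omega)
    · have hmn : m < n := by
        rcases Finset.mem_insert.mp hmS' with rfl | h
        · omega
        · have := Finset.mem_range.mp h; omega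
      rw [hGQb m hmn hm, hQb_root m hmS', mul_zero]
  have hYa_root : ∀ m ∈ S4, ∀ hm : m < n + 3, CW fYa ⟨m, hm⟩ = 0 := by
    intro m hmS hm
    rw [hS4_def] at hmS
    rcases Finset.mem_insert.mp hmS with rfl | hmS'
    · rw [hCw_n1 fYa hm, hcoeffOf fYa Fya hfYa_def (k - 2) (by omega)]
      exact hFya_km2
    · have hmn : m < n := by
        rcases Finset.mem_insert.mp hmS' with rfl | h
        · omega
        · have := Finset.mem_range.mp h; omega
      rw [hGFya m hmn hm, hFya_def, eval_mul, hQa_root m hmS', zero_mul, mul_zero]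
  have hYb_root : ∀ m ∈ S2, ∀ hm : m < n + 3, CW fYb ⟨m, hm⟩ = 0 := by
    intro m hmS hm
    rw [hS2_def] at hmS
    rcases Finset.mem_insert.mp hmS with rfl | hmS'
    · rw [hCw_n1 fYb hm, hcoeffOf fYb Fyb hfYb_def (k - 2) (by omega)]
      exact hFyb_km2
    · have hmn : m < n := by
        rcases Finset.mem_insert.mp hmS' with rfl | h
        · omega
        · have := Finset.mem_range.mp h; omega
      rw [hGFyb m hmn hm, hFyb_def, eval_mul, hQb_root m hmS', zero_mul, mul_zero]
  -- nonzero coordinates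
  have hXa_one : CW fXa ⟨n + 1, by omega⟩ = 1 := by
    rw [hCw_n1 fXa (by omega), hcoeffOf fXa Qa hfXa_def (k - 2) (by omega),
      show k - 2 = Qa.natDegree from hQad.symm]
    exact hQam.coeff_natDegree
  have hXb_one : CW fXb ⟨n + 1, by omega⟩ = 1 := by
    rw [hCw_n1 fXb (by omega), hcoeffOf fXb Qb hfXb_def (k - 2) (by omega),
      show k - 2 = Qb.natDegree from hQbd.symm]
    exact hQbm.coeff_natDegree
  have hYa_one : CW fYa ⟨n, by omega⟩ = 1 := by
    rw [hCw_n fYa (by omega), hcoeffOf fYa Fya hfYa_def (k - 1) (by omega)]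
    exact hFya_km1
  have hYb_one : CW fYb ⟨n, by omega⟩ = 1 := by
    rw [hCw_n fYb (by omega), hcoeffOf fYb Fyb hfYb_def (k - 1) (by omega)]
    exact hFyb_km1
  -- membership in the GRS code
  have hmem : ∀ fc : Fin k → F, (fun i => c i * CW fc (π i)) ∈ GRScode (n + 3) k b w := by
    intro fc
    have h1 : CW fc ∈ Ccode n k α v η δ := Set.mem_range_self fc
    have h2 := Set.mem_image_of_mem (fun x : Fin (n + 3) → F => fun i => c i * x (π i)) h1
    rw [himg] at h2
    exact h2
  obtain ⟨gXa, hgXa_deg, hgXa_val⟩ := hmem fXa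
  obtain ⟨gXb, hgXb_deg, hgXb_val⟩ := hmem fXb
  obtain ⟨gYa, hgYa_deg, hgYa_val⟩ := hmem fYa
  obtain ⟨gYb, hgYb_deg, hgYb_val⟩ := hmem fYb
  -- transfer of values
  have hval : ∀ (fc : Fin k → F) (g : Polynomial F),
      (∀ i, c i * CW fc (π i) = w i * Polynomial.eval (b i) g) →
      ∀ (m : ℕ) (hm : m < n + 3),
        c (π.symm ⟨m, hm⟩) * CW fc ⟨m, hm⟩ = w (π.symm ⟨m, hm⟩) * g.eval (βn m) := by
    intro fc g hg m hm
    have h := hg (π.symm ⟨m, hm⟩)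
    rw [Equiv.apply_symm_apply] at h
    rw [h]
    have hbeq : βn m = b (π.symm ⟨m, hm⟩) := by simp only [hβn_def]; rw [dif_pos hm]
    rw [hbeq]
  have hroot : ∀ (fc : Fin k → F) (g : Polynomial F),
      (∀ i, c i * CW fc (π i) = w i * Polynomial.eval (b i) g) →
      ∀ (m : ℕ) (hm : m < n + 3), CW fc ⟨m, hm⟩ = 0 → g.eval (βn m) = 0 := by
    intro fc g hg m hm h0
    have h := hval fc g hg m hm
    rw [h0, mul_zero] at h
    exact (mul_eq_zero.mp h.symm).resolve_left (hw _)
  have hnzg : ∀ (fc : Fin k → F) (g : Polynomial F),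
      (∀ i, c i * CW fc (π i) = w i * Polynomial.eval (b i) g) →
      ∀ (m : ℕ) (hm : m < n + 3), CW fc ⟨m, hm⟩ ≠ 0 → g ≠ 0 := by
    intro fc g hg m hm h0 hgz
    have h := hval fc g hg m hm
    rw [hgz, eval_zero, mul_zero] at h
    exact h0 ((mul_eq_zero.mp h).resolve_left (hc _))
  have hgXa0 : gXa ≠ 0 := hnzg fXa gXa hgXa_val (n + 1) (by omega) (by rw [hXa_one]; exact one_ne_zero)
  have hgXb0 : gXb ≠ 0 := hnzg fXb gXb hgXb_val (n + 1) (by omega) (by rw [hXb_one]; exact one_ne_zero)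
  have hgYa0 : gYa ≠ 0 := hnzg fYa gYa hgYa_val n (by omega) (by rw [hYa_one]; exact one_ne_zero)
  have hgYb0 : gYb ≠ 0 := hnzg fYb gYb hgYb_val n (by omega) (by rw [hYb_one]; exact one_ne_zero)
  -- the GRS polynomials are scalar multiples of products of linear factors
  set Q1 : Polynomial F := ∏ m ∈ S1, (X - C (βn m)) with hQ1_def
  set Q2 : Polynomial F := ∏ m ∈ S2, (X - C (βn m)) with hQ2_def
  set Q3 : Polynomial F := ∏ m ∈ S3, (X - C (βn m)) with hQ3_def
  set Q4 : Polynomial F := ∏ m ∈ S4, (X - C (βn m)) with hQ4_def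
  have hβinjS : ∀ (S : Finset ℕ), (∀ m ∈ S, m < n + 3) →
      ∀ m₁ ∈ S, ∀ m₂ ∈ S, βn m₁ = βn m₂ → m₁ = m₂ :=
    fun S hS m₁ h₁ m₂ h₂ he => hβinj m₁ (hS _ h₁) m₂ (hS _ h₂) he
  obtain ⟨s1, hs1, hgXa_eq⟩ := aux_eq_C_mul_prod hgXa_deg hgXa0 S1 βn (hβinjS S1 hS1lt)
    (fun m hm => hroot fXa gXa hgXa_val m (hS1lt m hm) (hXa_root m hm _)) hS1card
  obtain ⟨s2, hs2, hgYb_eq⟩ := aux_eq_C_mul_prod hgYb_deg hgYb0 S2 βn (hβinjS S2 hS2lt)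
    (fun m hm => hroot fYb gYb hgYb_val m (hS2lt m hm) (hYb_root m hm _)) hS2card
  obtain ⟨s3, hs3, hgXb_eq⟩ := aux_eq_C_mul_prod hgXb_deg hgXb0 S3 βn (hβinjS S3 hS3lt)
    (fun m hm => hroot fXb gXb hgXb_val m (hS3lt m hm) (hXb_root m hm _)) hS3card
  obtain ⟨s4, hs4, hgYa_eq⟩ := aux_eq_C_mul_prod hgYa_deg hgYa0 S4 βn (hβinjS S4 hS4lt)
    (fun m hm => hroot fYa gYa hgYa_val m (hS4lt m hm) (hYa_root m hm _)) hS4card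
  rw [← hQ1_def] at hgXa_eq
  rw [← hQ2_def] at hgYb_eq
  rw [← hQ3_def] at hgXb_eq
  rw [← hQ4_def] at hgYa_eq
  have hQprod : Q1 * Q2 = Q3 * Q4 := by
    rw [hQ1_def, hQ2_def, hQ3_def, hQ4_def, hS1_def, hS2_def, hS3_def, hS4_def]
    simp only [Finset.prod_insert h_in3, Finset.prod_insert h_in4, Finset.prod_insert h_in5,
      Finset.prod_insert h_in6, Finset.prod_insert h_in1, Finset.prod_insert h_in2]
    ring
  -- the master identity
  have hmaster : ∀ (m : ℕ) (hm : m < n + 3),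
      (s3 * s4) * (CW fXa ⟨m, hm⟩ * CW fYb ⟨m, hm⟩)
        = (s1 * s2) * (CW fXb ⟨m, hm⟩ * CW fYa ⟨m, hm⟩) := by
    intro m hm
    have h1 := hval fXa gXa hgXa_val m hm
    have h2 := hval fYb gYb hgYb_val m hm
    have h3 := hval fXb gXb hgXb_val m hm
    have h4 := hval fYa gYa hgYa_val m hm
    rw [hgXa_eq, eval_mul, eval_C] at h1
    rw [hgYb_eq, eval_mul, eval_C] at h2
    rw [hgXb_eq, eval_mul, eval_C] at h3
    rw [hgYa_eq, eval_mul, eval_C] at h4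
    have hci := hc (π.symm ⟨m, hm⟩)
    have e1 : CW fXa ⟨m, hm⟩
        = (c (π.symm ⟨m, hm⟩))⁻¹ * (w (π.symm ⟨m, hm⟩) * (s1 * Q1.eval (βn m))) := by
      rw [← h1, inv_mul_cancel_left₀ hci]
    have e2 : CW fYb ⟨m, hm⟩
        = (c (π.symm ⟨m, hm⟩))⁻¹ * (w (π.symm ⟨m, hm⟩) * (s2 * Q2.eval (βn m))) := by
      rw [← h2, inv_mul_cancel_left₀ hci]
    have e3 : CW fXb ⟨m, hm⟩
        = (c (π.symm ⟨m, hm⟩))⁻¹ * (w (π.symm ⟨m, hm⟩) * (s3 * Q3.eval (βn m))) := by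
      rw [← h3, inv_mul_cancel_left₀ hci]
    have e4 : CW fYa ⟨m, hm⟩
        = (c (π.symm ⟨m, hm⟩))⁻¹ * (w (π.symm ⟨m, hm⟩) * (s4 * Q4.eval (βn m))) := by
      rw [← h4, inv_mul_cancel_left₀ hci]
    have hQe : Q1.eval (βn m) * Q2.eval (βn m) = Q3.eval (βn m) * Q4.eval (βn m) := by
      have h := congrArg (Polynomial.eval (βn m)) hQprod
      simpa only [eval_mul] using h
    rw [e1, e2, e3, e4]
    linear_combination ((c (π.symm ⟨m, hm⟩))⁻¹ * w (π.symm ⟨m, hm⟩))^2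
      * (s1 * s2 * s3 * s4) * hQe
  -- evaluate at fresh points to get a polynomial identity
  have hQaE : ∀ t : ℕ, k - 2 < t → ∀ ht : t < n, Qa.eval (αn t) ≠ 0 := by
    intro t ht1 ht2
    rw [hQa_def, eval_mul]
    refine mul_ne_zero ?_ ?_
    · rw [hPA_def, eval_prod]
      refine Finset.prod_ne_zero_iff.mpr ?_
      intro m hmr
      have hmlt := Finset.mem_range.mp hmr
      simp only [eval_sub, eval_X, eval_C]
      exact sub_ne_zero.mpr (fun he => by have := hαinj t ht2 m (by omega) he; omega)
    · simp only [eval_sub, eval_X, eval_C]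
      exact sub_ne_zero.mpr (fun he => by have := hαinj t ht2 (k - 3) (by omega) he; omega)
  have hQbE : ∀ t : ℕ, k - 2 < t → ∀ ht : t < n, Qb.eval (αn t) ≠ 0 := by
    intro t ht1 ht2
    rw [hQb_def, eval_mul]
    refine mul_ne_zero ?_ ?_
    · rw [hPA_def, eval_prod]
      refine Finset.prod_ne_zero_iff.mpr ?_
      intro m hmr
      have hmlt := Finset.mem_range.mp hmr
      simp only [eval_sub, eval_X, eval_C]
      exact sub_ne_zero.mpr (fun he => by have := hαinj t ht2 m (by omega) he; omega)
    · simp only [eval_sub, eval_X, eval_C]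
      exact sub_ne_zero.mpr (fun he => by have := hαinj t ht2 (k - 2) (by omega) he; omega)
  have hFyae : ∀ x : F, Fya.eval x = Qa.eval x * Ra.eval x := fun x => by
    rw [hFya_def, eval_mul]
  have hFybe : ∀ x : F, Fyb.eval x = Qb.eval x * Rb.eval x := fun x => by
    rw [hFyb_def, eval_mul]
  have hDroot : ∀ t : ℕ, k - 1 ≤ t → ∀ ht : t < n,
      (C (s3 * s4) * Rb - C (s1 * s2) * Ra).eval (αn t) = 0 := by
    intro t ht1 ht2
    have hm := hmaster t (by omega)
    rw [hGQa t ht2 (by omega), hGFyb t ht2 (by omega), hGQb t ht2 (by omega),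
      hGFya t ht2 (by omega), hFyae (αn t), hFybe (αn t)] at hm
    have hvt := hv ⟨t, ht2⟩
    have hQae := hQaE t (by omega) ht2
    have hQbe := hQbE t (by omega) ht2
    have key : ((v ⟨t, ht2⟩ * v ⟨t, ht2⟩) * (Qa.eval (αn t) * Qb.eval (αn t))) *
        ((s3 * s4) * Rb.eval (αn t) - (s1 * s2) * Ra.eval (αn t)) = 0 := by
      linear_combination hm
    rcases mul_eq_zero.mp key with h | h
    · exact absurd h (mul_ne_zero (mul_ne_zero hvt hvt) (mul_ne_zero hQae hQbe))
    · simp only [eval_sub, eval_mul, eval_C]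
      linear_combination h
  set D : Polynomial F := C (s3 * s4) * Rb - C (s1 * s2) * Ra with hD_def
  have hDdeg : D.natDegree ≤ 4 := by
    refine (natDegree_sub_le _ _).trans ?_
    exact max_le ((natDegree_C_mul_le _ _).trans (by rw [hRbd]))
      ((natDegree_C_mul_le _ _).trans (by rw [hRad]))
  have hD0 : D = 0 := by
    refine eq_zero_of_natDegree_lt_card_of_eval_eq_zero D
      (f := fun i : Fin 5 => αn (k - 1 + (i : ℕ))) ?_ ?_ ?_
    · intro i1 i2 he
      have b1 := i1.isLt
      have b2 := i2.isLt
      have h := hαinj _ (by omega) _ (by omega) he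
      exact Fin.ext (by omega)
    · intro i
      have bi := i.isLt
      exact hDroot (k - 1 + (i : ℕ)) (by omega) (by omega)
    · rw [Fintype.card_fin]; omega
  have h4c := congrArg (fun q : Polynomial F => q.coeff 4) hD0
  simp only [hD_def, coeff_sub, coeff_C_mul, coeff_zero] at h4c
  rw [hRac, hRbc] at h4c
  have hss : s3 * s4 = s1 * s2 := by
    have h5 : (s3 * s4 - s1 * s2) * η = 0 := by linear_combination h4c
    rcases mul_eq_zero.mp h5 with h | h
    · exact sub_eq_zero.mp h
    · exact absurd h hη
  rw [hD_def, hss] at hD0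
  have hRR : Rb = Ra := by
    have h6 : C (s1 * s2) * (Rb - Ra) = 0 := by rw [mul_sub]; exact hD0
    rcases mul_eq_zero.mp h6 with h | h
    · exact absurd (C_eq_zero.mp h) (mul_ne_zero hs1 hs2)
    · exact sub_eq_zero.mp h
  -- final contradiction via the coefficient of X^(k+1)
  have hL : (Fya - Fyb).coeff (k + 1) = 0 := by
    have he : Fya - Fyb = p %ₘ Qb - p %ₘ Qa := by rw [hFya_eq, hFyb_eq]; ring
    rw [he, coeff_sub, hrem_b (k + 1) (by omega), hrem_a (k + 1) (by omega), sub_zero]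
  have hPR : (PA * Ra).coeff (k + 1) = η := by
    have h := coeff_mul_degree_add_degree PA Ra
    rw [hPAd, hRad, hPAm.leadingCoeff, one_mul,
      show k - 3 + 4 = k + 1 by omega] at h
    rw [h, ← coeff_natDegree, hRad]
    exact hRac
  have hR2 : (Fya - Fyb).coeff (k + 1) = (αn (k - 2) - αn (k - 3)) * η := by
    have hfact : Fya - Fyb = C (αn (k - 2) - αn (k - 3)) * (PA * Ra) := by
      rw [hFya_def, hFyb_def, hRR, hQa_def, hQb_def, C_sub]
      ring
    rw [hfact, coeff_C_mul, hPR]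
  rw [hL] at hR2
  have hαeq : αn (k - 2) = αn (k - 3) := by
    rcases mul_eq_zero.mp hR2.symm with h | h
    · exact sub_eq_zero.mp h
    · exact absurd h hη
  have := hαinj (k - 2) hk2n (k - 3) hk3n hαeq
  omega
end

section
/- Let k ≥ 3 and let β₁, …, β_{k−1} be elements of a commutative ring R. Let M be the (k−1) × (k−1) matrix whose first k−2 rows are (β_j^0)_j, (β_j^1)_j, …, (β_j^{k−3})_j and whose last row is (β_j^{k+2})_j. Then det(M) = h₄(β) · ∏_{1 ≤ i < j ≤ k−1} (β_j − β_i). -/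
open Finset

variable {F : Type*} [Field F]

lemma hsymPoly_one {R : Type*} [CommSemiring R] (v : Fin 1 → R) (r : ℕ) :
    hsymPoly v r = v 0 ^ r := by
  simp [hsymPoly, Finset.Nat.antidiagonalTuple_one]

lemma hsymPoly_cons {R : Type*} [CommSemiring R] {m : ℕ} (x : R) (w : Fin m → R) (r : ℕ) :
    hsymPoly (Fin.cons x w) r =
      ∑ p ∈ Finset.HasAntidiagonal.antidiagonal r, x ^ p.1 * hsymPoly w p.2 := by
  unfold hsymPoly
  simp_rw [Finset.mul_sum]
  rw [Finset.sum_sigma']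
  refine Finset.sum_nbij' (fun d : Fin (m+1) → ℕ => (⟨(d 0, ∑ i : Fin m, d i.succ), Fin.tail d⟩ : (_ : ℕ × ℕ) × (Fin m → ℕ)))
    (fun p => Fin.cons p.1.1 p.2) ?_ ?_ ?_ ?_ ?_
  · intro d hd
    rw [Finset.Nat.mem_antidiagonalTuple] at hd
    rw [Finset.mem_sigma]
    refine ⟨?_, ?_⟩
    · rw [Finset.HasAntidiagonal.mem_antidiagonal]
      rw [← hd, Fin.sum_univ_succ]
    · rw [Finset.Nat.mem_antidiagonalTuple]
      rfl
  · rintro ⟨⟨p1, p2⟩, e⟩ h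
    rw [Finset.mem_sigma] at h
    obtain ⟨h1, h2⟩ := h
    rw [Finset.HasAntidiagonal.mem_antidiagonal] at h1
    rw [Finset.Nat.mem_antidiagonalTuple] at h2 ⊢
    simp only [Fin.sum_univ_succ, Fin.cons_zero, Fin.cons_succ] at h1 h2 ⊢
    omega
  · intro d hd
    exact Fin.cons_self_tail d
  · rintro ⟨⟨p1, p2⟩, e⟩ h
    rw [Finset.mem_sigma] at h
    obtain ⟨h1, h2⟩ := h
    rw [Finset.Nat.mem_antidiagonalTuple] at h2
    simp [Fin.cons_zero, Fin.tail_cons, h2]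
  · intro d hd
    rw [Fin.prod_univ_succ]
    simp [Fin.cons_zero, Fin.cons_succ, Fin.tail]

lemma sum_pow_mul_split {R : Type*} [CommRing R] (x y : R) (m r : ℕ) :
    ∑ k ∈ Finset.range (m + 1 + r), x ^ k * y ^ (m + r - k) =
      y ^ (r + 1) * (∑ k ∈ Finset.range m, x ^ k * y ^ (m - 1 - k))
        + ∑ p ∈ Finset.HasAntidiagonal.antidiagonal r, y ^ p.1 * x ^ (m + p.2) := by
  rw [show m + 1 + r = m + (r + 1) by omega, Finset.sum_range_add, Finset.mul_sum]
  congr 1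
  · refine Finset.sum_congr rfl fun k hk => ?_
    rw [Finset.mem_range] at hk
    rw [show m + r - k = (m - 1 - k) + (r + 1) by omega, pow_add]
    ring
  · rw [Finset.Nat.sum_antidiagonal_eq_sum_range_succ_mk, ← Finset.sum_range_reflect]
    refine Finset.sum_congr rfl fun k hk => ?_
    rw [Finset.mem_range] at hk
    rw [show r + 1 - 1 - k = r - k by omega, show m + r - (m + (r - k)) = k by omega]
    simp only
    ring

lemma det_updateColumn_finsetSum {R : Type*} [CommRing R] {n : Type*} [DecidableEq n] [Fintype n]
    (A : Matrix n n R) (j : n) {ι : Type*} (s : Finset ι) (u : ι → n → R) :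
    (A.updateCol j (fun i => ∑ c ∈ s, u c i)).det = ∑ c ∈ s, (A.updateCol j (u c)).det := by
  classical
  induction s using Finset.induction_on with
  | empty =>
    simp only [Finset.sum_empty]
    exact Matrix.det_eq_zero_of_column_eq_zero j fun i => Matrix.updateCol_self
  | @insert a s ha ih =>
    simp only [Finset.sum_insert ha]
    rw [show (fun i => u a i + ∑ c ∈ s, u c i) = (u a + fun i => ∑ c ∈ s, u c i) from rfl,
      Matrix.det_updateCol_add, ih]

lemma det_genVan {R : Type*} [CommRing R] (m : ℕ) :
    ∀ (r : ℕ) (v : Fin (m + 1) → R),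
      (Matrix.of fun i j : Fin (m + 1) =>
          v i ^ (if (j : ℕ) < m then (j : ℕ) else m + r)).det =
        hsymPoly v r * ∏ i : Fin (m + 1), ∏ j ∈ Finset.Ioi i, (v j - v i) := by
  induction m with
  | zero =>
    intro r v
    rw [Matrix.det_fin_one]
    simp [hsymPoly_one]
  | succ m ih =>
    intro r v
    have hprod : (∏ i : Fin (m + 2), ∏ j ∈ Finset.Ioi i, (v j - v i)) =
        (∏ i : Fin (m + 1), (v i.succ - v 0)) *
          ∏ i : Fin (m + 1), ∏ j ∈ Finset.Ioi i, (v j.succ - v i.succ) := by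
      rw [Fin.prod_univ_succ, Fin.prod_Ioi_zero]
      congr 1
      exact Finset.prod_congr rfl fun i _ => Fin.prod_Ioi_succ _ _
    have hhs : hsymPoly v r = ∑ p ∈ Finset.HasAntidiagonal.antidiagonal r,
        v 0 ^ p.1 * hsymPoly (fun i : Fin (m + 1) => v i.succ) p.2 := by
      conv_lhs => rw [← Fin.cons_self_tail v, hsymPoly_cons]
      rfl
    calc
      (Matrix.of fun i j : Fin (m + 1 + 1) =>
            v i ^ (if (j : ℕ) < m + 1 then (j : ℕ) else m + 1 + r)).det
          = (Matrix.of fun i j : Fin (m + 2) =>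
              Matrix.vecCons (v 0 ^ (if (j : ℕ) < m + 1 then (j : ℕ) else m + 1 + r))
                (fun i => v i.succ ^ (if (j : ℕ) < m + 1 then (j : ℕ) else m + 1 + r)
                  - v 0 ^ (if (j : ℕ) < m + 1 then (j : ℕ) else m + 1 + r)) i).det := by
        refine Matrix.det_eq_of_forall_row_eq_smul_add_const (Matrix.vecCons 0 1) 0
          (Fin.cons_zero _ _) fun i j => ?_
        simp_rw [Matrix.of_apply]
        rw [Matrix.cons_val_zero]
        refine Fin.cases ?_ (fun i => ?_) i
        · simp
        · rw [Matrix.cons_val_succ, Matrix.cons_val_succ, Pi.one_apply]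
          ring
      _ = (Matrix.of fun i j : Fin (m + 1) =>
              Matrix.vecCons
                (v 0 ^ (if ((j : ℕ) + 1) < m + 1 then (j : ℕ) + 1 else m + 1 + r))
                (fun i => v i.succ ^ (if ((j : ℕ) + 1) < m + 1 then (j : ℕ) + 1 else m + 1 + r)
                  - v 0 ^ (if ((j : ℕ) + 1) < m + 1 then (j : ℕ) + 1 else m + 1 + r))
                (Fin.succAbove 0 i)).det := by
        simp_rw [Matrix.det_succ_column_zero, Fin.sum_univ_succ, Matrix.of_apply,
          Matrix.cons_val_zero, Matrix.submatrix, Matrix.of_apply, Matrix.cons_val_succ,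
          Fin.val_zero, Nat.zero_lt_succ, if_true, pow_zero, one_mul, sub_self,
          mul_zero, zero_mul, Finset.sum_const_zero, add_zero, Fin.val_succ]
        simp
      _ = (Matrix.of fun i j : Fin (m + 1) =>
            (v i.succ - v 0) *
              ∑ k ∈ Finset.range (if ((j : ℕ) + 1) < m + 1 then (j : ℕ) + 1 else m + 1 + r),
                v i.succ ^ k *
                  v 0 ^ ((if ((j : ℕ) + 1) < m + 1 then (j : ℕ) + 1 else m + 1 + r) - 1 - k)).det := by
        congr
        ext i j
        rw [Fin.succAbove_zero, Matrix.cons_val_succ, mul_comm]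
        exact (geom_sum₂_mul _ _ _).symm
      _ = (∏ i : Fin (m + 1), (v i.succ - v 0)) *
            (Matrix.of fun i j : Fin (m + 1) =>
              ∑ k ∈ Finset.range (if ((j : ℕ) + 1) < m + 1 then (j : ℕ) + 1 else m + 1 + r),
                v i.succ ^ k *
                  v 0 ^ ((if ((j : ℕ) + 1) < m + 1 then (j : ℕ) + 1 else m + 1 + r) - 1 - k)).det :=
        Matrix.det_mul_column _ _
      _ = (∏ i : Fin (m + 1), (v i.succ - v 0)) *
            (Matrix.of fun i j : Fin (m + 1) =>
              if (j : ℕ) < m then v i.succ ^ (j : ℕ)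
              else ∑ p ∈ Finset.HasAntidiagonal.antidiagonal r, v 0 ^ p.1 * v i.succ ^ (m + p.2)).det := by
        congr 1
        refine Matrix.det_eq_of_forall_col_eq_smul_add_pred
          (fun j => if (j : ℕ) + 1 < m then v 0 else v 0 ^ (r + 1)) (fun i => ?_) (fun i j => ?_)
        · -- column 0
          simp only [Matrix.of_apply, Fin.val_zero]
          rcases Nat.eq_zero_or_pos m with hm | hm
          · subst hm
            rw [if_neg (by omega), if_neg (by omega)]
            rw [show (0:ℕ) + 1 + r - 1 = 0 + r by omega]
            rw [show (0:ℕ) + 1 + r = 0 + 1 + r from rfl]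
            calc (∑ k ∈ Finset.range (0 + 1 + r), v i.succ ^ k * v 0 ^ (0 + r - k))
                = v 0 ^ (r + 1) * (∑ k ∈ Finset.range 0, v i.succ ^ k * v 0 ^ (0 - 1 - k))
                  + ∑ p ∈ Finset.HasAntidiagonal.antidiagonal r, v 0 ^ p.1 * v i.succ ^ (0 + p.2) :=
                  sum_pow_mul_split _ _ 0 r
              _ = ∑ p ∈ Finset.HasAntidiagonal.antidiagonal r, v 0 ^ p.1 * v i.succ ^ (0 + p.2) := by
                  simp
          · simp only [show (0:ℕ) + 1 < m + 1 by omega, if_pos hm, if_true]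
            simp [hm.ne']
        · -- successor columns
          simp only [Matrix.of_apply, Fin.val_succ, Fin.coe_castSucc]
          by_cases hj : (j : ℕ) + 1 < m
          · have h1 : (j : ℕ) + 1 + 1 < m + 1 := by omega
            have h2 : (j : ℕ) + 1 < m + 1 := by omega
            simp only [if_pos h1, if_pos h2, if_pos hj]
            rw [Finset.sum_range_succ]
            rw [show ((j : ℕ) + 1 + 1 - 1 - ((j : ℕ) + 1)) = 0 by omega, pow_zero, mul_one]
            rw [add_comm]
            congr 1
            rw [Finset.mul_sum]
            refine Finset.sum_congr rfl fun k hk => ?_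
            rw [Finset.mem_range] at hk
            rw [show ((j : ℕ) + 1 + 1 - 1 - k) = ((j : ℕ) + 1 - 1 - k) + 1 by omega, pow_succ]
            ring
          · have hjm : (j : ℕ) + 1 = m := by omega
            have h1 : ¬((j : ℕ) + 1 + 1 < m + 1) := by omega
            have h2 : (j : ℕ) + 1 < m + 1 := by omega
            simp only [if_neg h1, if_pos h2, if_neg hj]
            rw [show ((j : ℕ) + 1) = m from hjm]
            calc (∑ k ∈ Finset.range (m + 1 + r), v i.succ ^ k * v 0 ^ (m + 1 + r - 1 - k))
                = ∑ k ∈ Finset.range (m + 1 + r), v i.succ ^ k * v 0 ^ (m + r - k) :=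
                  Finset.sum_congr rfl fun k _ => by rw [show m + 1 + r - 1 - k = m + r - k by omega]
              _ = v 0 ^ (r + 1) * (∑ k ∈ Finset.range m, v i.succ ^ k * v 0 ^ (m - 1 - k))
                  + ∑ p ∈ Finset.HasAntidiagonal.antidiagonal r, v 0 ^ p.1 * v i.succ ^ (m + p.2) :=
                  sum_pow_mul_split _ _ m r
              _ = (∑ p ∈ Finset.HasAntidiagonal.antidiagonal r, v 0 ^ p.1 * v i.succ ^ (m + p.2))
                  + v 0 ^ (r + 1) * ∑ k ∈ Finset.range m, v i.succ ^ k * v 0 ^ (m - 1 - k) := by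
                  rw [add_comm]
      _ = (∏ i : Fin (m + 1), (v i.succ - v 0)) *
            ∑ p ∈ Finset.HasAntidiagonal.antidiagonal r,
              v 0 ^ p.1 * (Matrix.of fun i j : Fin (m + 1) =>
                v i.succ ^ (if (j : ℕ) < m then (j : ℕ) else m + p.2)).det := by
        congr 1
        have hTB : (Matrix.of fun i j : Fin (m + 1) =>
            if (j : ℕ) < m then v i.succ ^ (j : ℕ)
            else ∑ p ∈ Finset.HasAntidiagonal.antidiagonal r, v 0 ^ p.1 * v i.succ ^ (m + p.2)) =
            (Matrix.of fun i j : Fin (m + 1) =>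
              v i.succ ^ (if (j : ℕ) < m then (j : ℕ) else 0)).updateCol (Fin.last m)
              (fun i => ∑ p ∈ Finset.HasAntidiagonal.antidiagonal r, v 0 ^ p.1 * v i.succ ^ (m + p.2)) := by
          ext i j
          rw [Matrix.updateCol_apply]
          by_cases hj : j = Fin.last m
          · rw [if_pos hj, hj, Matrix.of_apply, if_neg (by simp)]
          · rw [if_neg hj]
            have hjm : (j : ℕ) < m := Fin.val_lt_last hj
            rw [Matrix.of_apply, Matrix.of_apply, if_pos hjm, if_pos hjm]
        rw [hTB, det_updateColumn_finsetSum]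
        refine Finset.sum_congr rfl fun p _ => ?_
        rw [show (fun i : Fin (m + 1) => v 0 ^ p.1 * v i.succ ^ (m + p.2)) =
          (v 0 ^ p.1 • fun i : Fin (m + 1) => v i.succ ^ (m + p.2)) from rfl,
          Matrix.det_updateCol_smul]
        congr 1
        congr 1
        ext i j
        rw [Matrix.updateCol_apply]
        by_cases hj : j = Fin.last m
        · rw [if_pos hj, hj, Matrix.of_apply, if_neg (by simp)]
        · rw [if_neg hj]
          have hjm : (j : ℕ) < m := Fin.val_lt_last hj
          rw [Matrix.of_apply, Matrix.of_apply, if_pos hjm, if_pos hjm]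
      _ = hsymPoly v r * ∏ i : Fin (m + 2), ∏ j ∈ Finset.Ioi i, (v j - v i) := by
        rw [hhs, hprod, Finset.mul_sum, Finset.sum_mul]
        refine Finset.sum_congr rfl fun p _ => ?_
        rw [ih p.2 (fun i => v i.succ)]
        ring

/-- Generalized Vandermonde determinant: the `(k-1) × (k-1)` matrix whose first `k-2` rows are
the power rows `β_j^0, …, β_j^{k-3}` and whose last row is `β_j^{k+2}` has determinant
`h₄(β) · ∏_{i < j} (β_j - β_i)`. -/
theorem det_genVandermonde_h4 {R : Type*} [CommRing R] (k : ℕ) (hk : 3 ≤ k)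
    (β : Fin (k - 1) → R) :
    Matrix.det (Matrix.of fun i j : Fin (k - 1) =>
        if (i : ℕ) < k - 2 then β j ^ (i : ℕ) else β j ^ (k + 2)) =
      hsymPoly β 4 * ∏ i : Fin (k - 1), ∏ j ∈ Finset.Ioi i, (β j - β i) := by
  obtain ⟨m, rfl⟩ : ∃ m, k = m + 3 := ⟨k - 3, by omega⟩
  have hM : (Matrix.of fun i j : Fin (m + 3 - 1) =>
      if (i : ℕ) < m + 3 - 2 then β j ^ (i : ℕ) else β j ^ (m + 3 + 2)) =
      Matrix.transpose (Matrix.of fun i j : Fin (m + 1 + 1) =>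
        β i ^ (if (j : ℕ) < m + 1 then (j : ℕ) else m + 1 + 4)) := by
    ext i j
    rw [Matrix.transpose_apply, Matrix.of_apply, Matrix.of_apply]
    by_cases hi : (i : ℕ) < m + 1
    · rw [if_pos hi, if_pos (show (i : ℕ) < m + 3 - 2 from hi)]
    · rw [if_neg hi, if_neg (show ¬((i : ℕ) < m + 3 - 2) from hi)]
  rw [hM, Matrix.det_transpose]
  exact det_genVan (m + 1) 4 β
end

section
/- Let k ≥ 3 and let β₁, …, β_{k−1} be elements of a commutative ring R. Let M be the (k−1) × (k−1) matrix whose first k−3 rows are (β_j^0)_j, (β_j^1)_j, …, (β_j^{k−4})_j, whose next row is (β_j^{k−2})_j, and whose last row is (β_j^{k+2})_j. Then det(M) = (h₁(β)·h₄(β) − h₅(β)) · ∏_{1 ≤ i < j ≤ k−1} (β_j − β_i). -/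
open Finset

variable {F : Type*} [Field F]

namespace GenVdm
variable {R : Type*} [CommRing R]

def hL : List R → ℕ → R
  | _, 0 => 1
  | [], _+1 => 0
  | a :: l, r+1 => a * hL (a :: l) r + hL l (r+1)

def eL : List R → ℕ → R
  | _, 0 => 1
  | [], _+1 => 0
  | a :: l, t+1 => a * eL l t + eL l (t+1)

@[simp] lemma hL_zero (l : List R) : hL l 0 = 1 := by cases l <;> simp [hL]
@[simp] lemma eL_zero (l : List R) : eL l 0 = 1 := by cases l <;> simp [eL]
@[simp] lemma hL_nil (r : ℕ) : hL ([] : List R) r = if r = 0 then 1 else 0 := by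
  cases r <;> simp [hL]
@[simp] lemma eL_nil (t : ℕ) : eL ([] : List R) t = if t = 0 then 1 else 0 := by
  cases t <;> simp [eL]

lemma hL_cons (a : R) (l : List R) (r : ℕ) :
    hL (a :: l) (r+1) = a * hL (a :: l) r + hL l (r+1) := by simp [hL]

lemma eL_cons (a : R) (l : List R) (t : ℕ) :
    eL (a :: l) (t+1) = a * eL l t + eL l (t+1) := by simp [eL]

lemma eL_eq_zero (l : List R) : ∀ t, l.length < t → eL l t = 0 := by
  induction l with
  | nil =>
      intro t ht
      cases t with
      | zero => omega
      | succ t => simp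
  | cons a l ih =>
      intro t ht
      cases t with
      | zero => omega
      | succ t =>
          simp only [List.length_cons] at ht
          rw [eL_cons, ih t (by omega), ih (t+1) (by omega)]
          ring

end GenVdm

namespace GenVdm
variable {R : Type*} [CommRing R]

lemma T_split (a : R) (l : List R) (n : ℕ) :
    ∑ t ∈ range (n+1), (-1:R)^t * eL l t * hL (a :: l) (n - t)
    = (∑ t ∈ range (n+1), (-1:R)^t * eL l t * hL l (n - t))
      + a * ∑ t ∈ range n, (-1:R)^t * eL l t * hL (a :: l) (n - 1 - t) := by
  rw [Finset.sum_range_succ, Finset.sum_range_succ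
    (f := fun t => (-1:R)^t * eL l t * hL l (n - t))]
  have key : ∀ t ∈ range n, (-1:R)^t * eL l t * hL (a :: l) (n - t)
      = (-1:R)^t * eL l t * hL l (n - t) + a * ((-1:R)^t * eL l t * hL (a :: l) (n - 1 - t)) := by
    intro t ht
    have htn : t < n := mem_range.mp ht
    have h1 : n - t = (n - 1 - t) + 1 := by omega
    rw [h1, hL_cons]
    have h2 : n - 1 - t + 1 = n - t := by omega
    rw [h2]
    ring
  rw [Finset.sum_congr rfl key, Finset.sum_add_distrib, Finset.mul_sum]
  simp only [Nat.sub_self, hL_zero]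
  ring

theorem ehF (l : List R) (n : ℕ) :
    ∑ t ∈ range (n+1), (-1:R)^t * eL l t * hL l (n - t) = if n = 0 then 1 else 0 := by
  induction l generalizing n with
  | nil =>
      rw [Finset.sum_eq_single 0]
      · simp
      · intro b _ hb
        cases b with
        | zero => omega
        | succ b => simp
      · intro h; exact absurd (mem_range.mpr (by omega)) h
  | cons a l ih =>
      cases n with
      | zero => simp
      | succ n' =>
          have hstep : ∑ t ∈ range (n'+1+1), (-1:R)^t * eL (a :: l) t * hL (a :: l) (n'+1 - t)
              = (∑ t ∈ range (n'+1+1), (-1:R)^t * eL l t * hL (a :: l) (n'+1 - t))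
                - a * ∑ t ∈ range (n'+1), (-1:R)^t * eL l t * hL (a :: l) (n' - t) := by
            rw [Finset.sum_range_succ' (f := fun t => (-1:R)^t * eL (a :: l) t * hL (a :: l) (n'+1 - t)),
                Finset.sum_range_succ' (f := fun t => (-1:R)^t * eL l t * hL (a :: l) (n'+1 - t))]
            have key : ∀ t ∈ range (n'+1), (-1:R)^(t+1) * eL (a :: l) (t+1) * hL (a :: l) (n'+1 - (t+1))
                = (-1:R)^(t+1) * eL l (t+1) * hL (a :: l) (n'+1 - (t+1))
                  - a * ((-1:R)^t * eL l t * hL (a :: l) (n' - t)) := by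
              intro t ht
              rw [eL_cons]
              have h2 : n' + 1 - (t+1) = n' - t := by omega
              rw [h2]
              ring
            rw [Finset.sum_congr rfl key, Finset.sum_sub_distrib, Finset.mul_sum]
            simp only [eL_zero]
            ring
          rw [hstep, T_split]
          have h3 : n' + 1 - 1 = n' := by omega
          rw [h3, ih (n'+1)]
          simp

end GenVdm

namespace GenVdm
variable {R : Type*} [CommRing R]

lemma prod_sub (l : List R) (x : R) :
    (l.map (fun a => x - a)).prod
      = ∑ t ∈ range (l.length + 1), (-1:R)^t * eL l t * x ^ (l.length - t) := by
  induction l with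
  | nil => simp
  | cons a l ih =>
      set L := l.length with hL'
      have hlen : (a :: l).length = L + 1 := by simp [hL']
      rw [List.map_cons, List.prod_cons, ih, hlen]
      rw [Finset.sum_range_succ' (f := fun t => (-1:R)^t * eL (a :: l) t * x ^ (L + 1 - t))]
      have key : ∀ t ∈ range (L+1), (-1:R)^(t+1) * eL (a :: l) (t+1) * x ^ (L + 1 - (t+1))
          = (-a) * ((-1:R)^t * eL l t * x ^ (L - t))
            - ((-1:R)^t * eL l (t+1) * x ^ (L - t)) := by
        intro t ht
        rw [eL_cons]
        have h2 : L + 1 - (t+1) = L - t := by omega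
        rw [h2]
        ring
      rw [Finset.sum_congr rfl key, Finset.sum_sub_distrib, ← Finset.mul_sum]
      have hsum2 : ∑ t ∈ range (L+1), (-1:R)^t * eL l (t+1) * x ^ (L - t)
          = ∑ t ∈ range L, (-1:R)^t * eL l (t+1) * x ^ (L - t) := by
        rw [Finset.sum_range_succ, eL_eq_zero l (L+1) (by omega)]
        simp
      have hXP : x * ∑ t ∈ range (L + 1), (-1:R)^t * eL l t * x ^ (L - t)
          = - (∑ t ∈ range L, (-1:R)^t * eL l (t+1) * x ^ (L - t)) + x ^ (L + 1) := by
        rw [Finset.mul_sum]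
        have e1 : ∀ t ∈ range (L+1), x * ((-1:R)^t * eL l t * x ^ (L - t))
            = (-1:R)^t * eL l t * x ^ (L + 1 - t) := by
          intro t ht
          have : L + 1 - t = (L - t) + 1 := by
            have := mem_range.mp ht; omega
          rw [this, pow_succ]
          ring
        rw [Finset.sum_congr rfl e1,
          Finset.sum_range_succ' (f := fun t => (-1:R)^t * eL l t * x ^ (L + 1 - t))]
        have e2 : ∀ t ∈ range L, (-1:R)^(t+1) * eL l (t+1) * x ^ (L + 1 - (t+1))
            = - ((-1:R)^t * eL l (t+1) * x ^ (L - t)) := by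
          intro t ht
          have : L + 1 - (t+1) = L - t := by omega
          rw [this]
          ring
        rw [Finset.sum_congr rfl e2, Finset.sum_neg_distrib]
        simp
      rw [hsum2]
      simp only [pow_zero, eL_zero, one_mul, Nat.sub_zero]
      linear_combination hXP

end GenVdm

namespace GenVdm
variable {R : Type*} [CommRing R]

lemma hL_cons_expand (a : R) (l : List R) (r : ℕ) :
    hL (a :: l) r = ∑ p ∈ Finset.HasAntidiagonal.antidiagonal r, a ^ p.1 * hL l p.2 := by
  induction r with
  | zero => simp
  | succ r ih =>
      rw [hL_cons, ih, Finset.Nat.antidiagonal_succ, Finset.sum_cons, Finset.sum_map,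
        Finset.mul_sum]
      simp only [Function.Embedding.coeFn_mk, Function.Embedding.prodMap,
        Function.Embedding.refl_apply, Prod.map, pow_zero, one_mul]
      rw [add_comm]
      congr 1
      apply Finset.sum_congr rfl
      intro p hp
      rw [pow_succ]
      ring

lemma hsymPoly_eq_hL : ∀ {m : ℕ} (β : Fin m → R) (r : ℕ),
    hsymPoly β r = hL (List.ofFn β) r := by
  intro m
  induction m with
  | zero =>
      intro β r
      cases r with
      | zero => simp [hsymPoly, Finset.Nat.antidiagonalTuple_zero_zero]
      | succ r => simp [hsymPoly, Finset.Nat.antidiagonalTuple_zero_succ]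
  | succ m ih =>
      intro β r
      rw [List.ofFn_succ, hL_cons_expand]
      have : ∀ p ∈ Finset.HasAntidiagonal.antidiagonal r,
          β 0 ^ p.1 * hL (List.ofFn fun i : Fin m => β i.succ) p.2
          = β 0 ^ p.1 * hsymPoly (fun i : Fin m => β i.succ) p.2 := by
        intro p hp
        rw [ih]
      rw [Finset.sum_congr rfl this]
      unfold hsymPoly
      simp only [Finset.mul_sum]
      rw [Finset.sum_sigma']
      refine Finset.sum_bij' (fun d _ => (⟨(d 0, ∑ i : Fin m, d i.succ), Fin.tail d⟩ :
          (_ : ℕ × ℕ) × (Fin m → ℕ)))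
        (fun p _ => Fin.cons p.1.1 p.2) ?hi ?hj ?left ?right ?h
      case hi =>
        intro d hd
        rw [Finset.Nat.mem_antidiagonalTuple] at hd
        simp only [Finset.mem_sigma, Finset.HasAntidiagonal.mem_antidiagonal,
          Finset.Nat.mem_antidiagonalTuple]
        refine ⟨?_, rfl⟩
        rw [← hd, Fin.sum_univ_succ]
      case hj =>
        intro p hp
        simp only [Finset.mem_sigma, Finset.HasAntidiagonal.mem_antidiagonal,
          Finset.Nat.mem_antidiagonalTuple] at hp
        rw [Finset.Nat.mem_antidiagonalTuple, Fin.sum_univ_succ]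
        simp only [Fin.cons_zero, Fin.cons_succ]
        rw [hp.2, hp.1]
      case left =>
        intro d hd
        exact Fin.cons_self_tail d
      case right =>
        intro p hp
        simp only [Finset.mem_sigma, Finset.HasAntidiagonal.mem_antidiagonal,
          Finset.Nat.mem_antidiagonalTuple] at hp
        refine Sigma.ext ?_ ?_
        · simp only [Fin.cons_zero, Fin.cons_succ]
          rw [Prod.ext_iff]
          refine ⟨rfl, ?_⟩
          simpa using hp.2
        · simp [Fin.tail_cons]
      case h =>
        intro d hd
        rw [Fin.prod_univ_succ]
        rfl

end GenVdm

namespace GenVdm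
variable {R : Type*} [CommRing R]

/-- remainder coefficients -/
def ccL (l : List R) (N s : ℕ) : R :=
  ∑ t ∈ range (l.length - s), (-1:R)^t * eL l t * hL l (N - s - t)

lemma power_expand {m : ℕ} (β : Fin m → R) (j : Fin m) :
    β j ^ m = ∑ s ∈ range m, (-1:R)^(m - 1 - s) * eL (List.ofFn β) (m - s) * β j ^ s := by
  set l := List.ofFn β with hldef
  have hl : l.length = m := List.length_ofFn
  have hprod : (l.map (fun a => β j - a)).prod = 0 := by
    apply List.prod_eq_zero
    rw [List.mem_map]
    exact ⟨β j, List.mem_ofFn.mpr ⟨j, rfl⟩, sub_self _⟩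
  have hv := prod_sub l (β j)
  rw [hl, hprod] at hv
  rw [Finset.sum_range_succ' (f := fun t => (-1:R)^t * eL l t * β j ^ (m - t))] at hv
  simp only [pow_zero, eL_zero, one_mul, Nat.sub_zero] at hv
  rw [← Finset.sum_range_reflect (fun s => (-1:R)^(m - 1 - s) * eL l (m - s) * β j ^ s) m]
  have ptwise : ∀ t ∈ range m,
      (-1:R)^(m - 1 - (m - 1 - t)) * eL l (m - (m - 1 - t)) * β j ^ (m - 1 - t)
      = - ((-1:R)^(t+1) * eL l (t+1) * β j ^ (m - (t+1))) := by
    intro t ht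
    have htm : t < m := mem_range.mp ht
    have e1 : m - 1 - (m - 1 - t) = t := by omega
    have e2 : m - (m - 1 - t) = t + 1 := by omega
    have e3 : m - (t+1) = m - 1 - t := by omega
    rw [e1, e2, e3]
    ring
  rw [Finset.sum_congr rfl ptwise, Finset.sum_neg_distrib]
  linear_combination - hv

lemma cc_base (l : List R) (s : ℕ) (hs : s < l.length) :
    ccL l l.length s = (-1:R)^(l.length - 1 - s) * eL l (l.length - s) := by
  have h := ehF l (l.length - s)
  rw [if_neg (by omega)] at h
  rw [Finset.sum_range_succ, Nat.sub_self, hL_zero, mul_one] at h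
  have e1 : (-1:R)^(l.length - 1 - s) = - (-1:R)^(l.length - s) := by
    have : l.length - s = (l.length - 1 - s) + 1 := by omega
    rw [this, pow_succ]
    ring
  unfold ccL
  rw [e1]
  linear_combination h

lemma cc_top (l : List R) (r : ℕ) (h : 1 ≤ l.length) :
    ccL l (l.length + r) (l.length - 1) = hL l (r + 1) := by
  unfold ccL
  have e1 : l.length - (l.length - 1) = 1 := by omega
  rw [e1, Finset.sum_range_one]
  have e2 : l.length + r - (l.length - 1) - 0 = r + 1 := by omega
  rw [e2]
  simp

lemma cc_zero (l : List R) (r : ℕ) (h : 1 ≤ l.length) :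
    ccL l (l.length + r + 1) 0
      = hL l (r + 1) * ((-1:R)^(l.length - 1) * eL l l.length) := by
  have hF := ehF l (l.length + r + 1)
  rw [if_neg (by omega)] at hF
  -- truncate the sum to range (l.length + 1)
  have htr : ∑ t ∈ range (l.length + 1), (-1:R)^t * eL l t * hL l (l.length + r + 1 - t)
      = ∑ t ∈ range (l.length + r + 1 + 1), (-1:R)^t * eL l t * hL l (l.length + r + 1 - t) := by
    apply Finset.sum_subset
    · intro t ht
      rw [mem_range] at *
      omega
    · intro t ht hnt
      rw [mem_range] at ht hnt
      rw [eL_eq_zero l t (by omega)]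
      ring
  rw [← htr] at hF
  rw [Finset.sum_range_succ] at hF
  have e2 : l.length + r + 1 - l.length = r + 1 := by omega
  rw [e2] at hF
  unfold ccL
  have e3 : ∀ t, l.length + r + 1 - 0 - t = l.length + r + 1 - t := by intro t; omega
  simp only [Nat.sub_zero]
  have e4 : (-1:R)^(l.length) = - (-1:R)^(l.length - 1) := by
    have h1 : l.length - 1 + 1 = l.length := by omega
    conv_lhs => rw [← h1]
    rw [pow_succ]
    ring
  rw [e4] at hF
  linear_combination hF

lemma cc_succ (l : List R) (r s : ℕ) (hs : s + 1 < l.length) :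
    ccL l (l.length + r + 1) (s + 1)
      = ccL l (l.length + r) s
        + hL l (r + 1) * ((-1:R)^(l.length - 1 - (s+1)) * eL l (l.length - (s+1))) := by
  unfold ccL
  have e1 : l.length - s = (l.length - (s+1)) + 1 := by omega
  rw [e1, Finset.sum_range_succ]
  have e2 : ∀ t, l.length + r + 1 - (s + 1) - t = l.length + r - s - t := by intro t; omega
  simp only [e2]
  have e3 : l.length + r - s - (l.length - (s+1)) = r + 1 := by omega
  rw [e3]
  have e4 : (-1:R)^(l.length - (s+1)) = - (-1:R)^(l.length - 1 - (s+1)) := by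
    have h1 : l.length - 1 - (s+1) + 1 = l.length - (s+1) := by omega
    conv_lhs => rw [← h1]
    rw [pow_succ]
    ring
  rw [e4]
  ring

end GenVdm

namespace GenVdm
variable {R : Type*} [CommRing R]

lemma expand {m : ℕ} (β : Fin m → R) (r : ℕ) (j : Fin m) (hm : 1 ≤ m) :
    β j ^ (m + r) = ∑ s ∈ range m, ccL (List.ofFn β) (m + r) s * β j ^ s := by
  obtain ⟨m', rfl⟩ : ∃ m', m = m' + 1 := ⟨m - 1, by omega⟩
  set l := List.ofFn β with hldef
  have hl : l.length = m' + 1 := List.length_ofFn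
  set x := β j with hxdef
  induction r with
  | zero =>
      rw [Nat.add_zero, power_expand β j]
      apply Finset.sum_congr rfl
      intro s hs
      have hb := cc_base l s (by rw [hl]; exact mem_range.mp hs)
      rw [hl] at hb
      rw [hb]
  | succ r ih =>
      show x ^ (m' + 1 + r + 1) = ∑ s ∈ range (m' + 1), ccL l (m' + 1 + r + 1) s * x ^ s
      have hx : x ^ (m' + 1 + r + 1) = (∑ s ∈ range (m' + 1), ccL l (m' + 1 + r) s * x ^ s) * x := by
        rw [← ih, ← pow_succ]
      rw [hx, Finset.sum_mul]
      have pt1 : ∀ s ∈ range (m' + 1), ccL l (m' + 1 + r) s * x ^ s * x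
          = ccL l (m' + 1 + r) s * x ^ (s + 1) := by
        intro s hs
        rw [pow_succ]
        ring
      rw [Finset.sum_congr rfl pt1, Finset.sum_range_succ]
      -- top coefficient
      have htop := cc_top l r (by omega)
      rw [hl] at htop
      simp only [Nat.add_sub_cancel] at htop
      rw [htop]
      -- x ^ (m'+1)
      have hpow := power_expand β j
      rw [← hxdef, ← hldef] at hpow
      rw [hpow]
      -- split both "Σ over range (m'+1)" sums as  f 0 + Σ f (s+1)
      rw [Finset.sum_range_succ' (f := fun s => ccL l (m' + 1 + r + 1) s * x ^ s),
        Finset.sum_range_succ' (f := fun s => (-1:R)^(m' + 1 - 1 - s) * eL l (m' + 1 - s) * x ^ s)]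
      have pt2 : ∀ s ∈ range m', ccL l (m' + 1 + r + 1) (s + 1) * x ^ (s + 1)
          = ccL l (m' + 1 + r) s * x ^ (s + 1)
            + hL l (r + 1) * ((-1:R)^(m' + 1 - 1 - (s+1)) * eL l (m' + 1 - (s+1)) * x ^ (s+1)) := by
        intro s hs
        have hc := cc_succ l r s (by rw [hl]; have := mem_range.mp hs; omega)
        rw [hl] at hc
        rw [hc]
        ring
      rw [Finset.sum_congr rfl pt2, Finset.sum_add_distrib]
      have hz := cc_zero l r (by omega)
      rw [hl] at hz
      rw [hz]
      rw [mul_add, Finset.mul_sum]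
      simp only [Nat.sub_zero, pow_zero, mul_one]
      ring

end GenVdm

namespace GenVdm
variable {R : Type*} [CommRing R]

lemma eL_one_eq_hL_one (l : List R) : eL l 1 = hL l 1 := by
  induction l with
  | nil => simp
  | cons a l ih => rw [eL_cons, hL_cons, ih]; simp

lemma cc_final (l : List R) (h2 : 2 ≤ l.length) :
    ccL l (l.length + 3) (l.length - 2) = hL l 5 - eL l 1 * hL l 4 := by
  unfold ccL
  have e1 : l.length - (l.length - 2) = 2 := by omega
  rw [e1, Finset.sum_range_succ, Finset.sum_range_one]
  have e2 : l.length + 3 - (l.length - 2) - 0 = 5 := by omega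
  have e3 : l.length + 3 - (l.length - 2) - 1 = 4 := by omega
  rw [e2, e3]
  simp
  ring

theorem aux (m : ℕ) (hm : 2 ≤ m) (β : Fin m → R) :
    Matrix.det (Matrix.of fun i j : Fin m =>
        if (i : ℕ) < m - 2 then β j ^ (i : ℕ)
        else if (i : ℕ) = m - 2 then β j ^ (m - 1)
        else β j ^ (m + 3)) =
      (hsymPoly β 1 * hsymPoly β 4 - hsymPoly β 5) *
        ∏ i : Fin m, ∏ j ∈ Finset.Ioi i, (β j - β i) := by
  set l := List.ofFn β with hldef
  have hl : l.length = m := List.length_ofFn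
  set i₀ : Fin m := ⟨m - 2, by omega⟩ with hi₀
  set i₁ : Fin m := ⟨m - 1, by omega⟩ with hi₁
  have hne : i₀ ≠ i₁ := Fin.ne_of_val_ne (show m - 2 ≠ m - 1 by omega)
  set σ : Equiv.Perm (Fin m) := Equiv.swap i₀ i₁ with hσ
  set A : Matrix (Fin m) (Fin m) R := ((Matrix.vandermonde β).transpose).submatrix σ id
    with hAdef
  have hA : ∀ i j, A i j = β j ^ ((σ i : Fin m) : ℕ) := fun i j => rfl
  have hMA : (Matrix.of fun i j : Fin m =>
        if (i : ℕ) < m - 2 then β j ^ (i : ℕ)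
        else if (i : ℕ) = m - 2 then β j ^ (m - 1)
        else β j ^ (m + 3)) = A.updateRow i₁ (fun j => β j ^ (m + 3)) := by
    ext i j
    rw [Matrix.updateRow_apply]
    by_cases h1 : i = i₁
    · rw [if_pos h1]
      have hv : (i : ℕ) = m - 1 := by rw [h1]
      simp only [Matrix.of_apply]
      rw [if_neg (by omega), if_neg (by omega)]
    · rw [if_neg h1, hA]
      simp only [Matrix.of_apply]
      by_cases h2 : (i : ℕ) < m - 2
      · rw [if_pos h2]
        have hswap : σ i = i := by
          rw [hσ]
          apply Equiv.swap_apply_of_ne_of_ne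
          · exact Fin.ne_of_val_ne (show (i : ℕ) ≠ m - 2 by omega)
          · exact Fin.ne_of_val_ne (show (i : ℕ) ≠ m - 1 by omega)
        rw [hswap]
      · rw [if_neg h2]
        have h3 : (i : ℕ) = m - 2 := by
          have hlt : (i : ℕ) < m := i.isLt
          have hne1 : (i : ℕ) ≠ m - 1 := fun hc => h1 (Fin.ext hc)
          omega
        rw [if_pos h3]
        have hii : i = i₀ := Fin.ext h3
        rw [hii, hσ, Equiv.swap_apply_left]
  have hrow : (fun j => β j ^ (m + 3))
      = ∑ i : Fin m, ccL l (m + 3) ((σ i : Fin m) : ℕ) • A i := by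
    funext j
    rw [Finset.sum_apply]
    have pt : ∀ i ∈ univ, (ccL l (m + 3) ((σ i : Fin m) : ℕ) • A i) j
        = (fun i : Fin m => ccL l (m + 3) (i : ℕ) * β j ^ (i : ℕ)) (σ i) := by
      intro i _
      rw [Pi.smul_apply, hA, smul_eq_mul]
    rw [Finset.sum_congr rfl pt,
      Equiv.sum_comp σ (fun i : Fin m => ccL l (m + 3) (i : ℕ) * β j ^ (i : ℕ)),
      Fin.sum_univ_eq_sum_range (fun s => ccL l (m + 3) s * β j ^ s) m]
    exact expand β 3 j (by omega)
  rw [hMA, hrow, Matrix.det_updateRow_sum]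
  have hσ1 : σ i₁ = i₀ := by rw [hσ]; exact Equiv.swap_apply_right _ _
  have hdetA : A.det = - ∏ i : Fin m, ∏ j ∈ Finset.Ioi i, (β j - β i) := by
    rw [hAdef, Matrix.det_permute, Matrix.det_transpose, Matrix.det_vandermonde]
    rw [Equiv.Perm.sign_swap hne]
    simp
  rw [hσ1, hdetA]
  have hcc : ccL l (m + 3) ((i₀ : Fin m) : ℕ) = hL l 5 - eL l 1 * hL l 4 := by
    have hc := cc_final l (by omega)
    rw [hl] at hc
    exact hc
  rw [hcc, eL_one_eq_hL_one]
  rw [show hsymPoly β 1 = hL l 1 from hsymPoly_eq_hL β 1,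
    show hsymPoly β 4 = hL l 4 from hsymPoly_eq_hL β 4,
    show hsymPoly β 5 = hL l 5 from hsymPoly_eq_hL β 5]
  rw [smul_eq_mul]
  ring

end GenVdm


/-- Generalized Vandermonde determinant: the `(k-1) × (k-1)` matrix whose first `k-3` rows are
the power rows `β_j^0, …, β_j^{k-4}`, whose next row is `β_j^{k-2}` and whose last row is
`β_j^{k+2}` has determinant `(h₁(β)·h₄(β) - h₅(β)) · ∏_{i < j} (β_j - β_i)`. -/
theorem det_genVandermonde_h1h4_sub_h5 {R : Type*} [CommRing R] (k : ℕ) (hk : 3 ≤ k)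
    (β : Fin (k - 1) → R) :
    Matrix.det (Matrix.of fun i j : Fin (k - 1) =>
        if (i : ℕ) < k - 3 then β j ^ (i : ℕ)
        else if (i : ℕ) = k - 3 then β j ^ (k - 2)
        else β j ^ (k + 2)) =
      (hsymPoly β 1 * hsymPoly β 4 - hsymPoly β 5) *
        ∏ i : Fin (k - 1), ∏ j ∈ Finset.Ioi i, (β j - β i) := by
  have h1 : k - 3 = k - 1 - 2 := by omega
  have h2 : k - 2 = k - 1 - 1 := by omega
  have h3 : k + 2 = k - 1 + 3 := by omega
  rw [h1, h2, h3]
  exact GenVdm.aux (k - 1) (by omega) β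
end

section
/- Let k ≥ 3 and let β₁, …, β_{k−2} be elements of a commutative ring R. Let M be the (k−2) × (k−2) matrix whose first k−3 rows are (β_j^0)_j, (β_j^1)_j, …, (β_j^{k−4})_j and whose last row is (β_j^{k+2})_j. Then det(M) = h₅(β) · ∏_{1 ≤ i < j ≤ k−2} (β_j − β_i). -/
open Finset

variable {F : Type*} [Field F]

section Aux

variable {R : Type*} [CommSemiring R]

lemma hsymPoly_zero {m : ℕ} (β : Fin m → R) : hsymPoly β 0 = 1 := by
  simp [hsymPoly, Finset.Nat.antidiagonalTuple_zero_right]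

lemma hsymPoly_fin_zero (β : Fin 0 → R) (r : ℕ) : hsymPoly β (r + 1) = 0 := by
  simp [hsymPoly]

/-- Splitting off the head variable as a double sum over the antidiagonal. -/
lemma hsymPoly_head {m : ℕ} (β : Fin (m + 1) → R) (r : ℕ) :
    hsymPoly β r = ∑ p ∈ Finset.HasAntidiagonal.antidiagonal r, β 0 ^ p.1 * hsymPoly (Fin.tail β) p.2 := by
  unfold hsymPoly
  simp_rw [Finset.mul_sum]
  rw [Finset.sum_sigma']
  refine Finset.sum_bij'
    (fun d _ => (⟨(d 0, ∑ i, Fin.tail d i), Fin.tail d⟩ :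
      (_ : ℕ × ℕ) × (Fin m → ℕ)))
    (fun x _ => Fin.cons x.1.1 x.2) ?_ ?_ ?_ ?_ ?_
  · intro d hd
    rw [Finset.Nat.mem_antidiagonalTuple] at hd
    simp only [Finset.mem_sigma, Finset.HasAntidiagonal.mem_antidiagonal,
      Finset.Nat.mem_antidiagonalTuple]
    refine ⟨?_, trivial⟩
    rw [← hd, Fin.sum_univ_succ]
    rfl
  · rintro ⟨⟨a, b⟩, d⟩ hx
    simp only [Finset.mem_sigma, Finset.HasAntidiagonal.mem_antidiagonal,
      Finset.Nat.mem_antidiagonalTuple] at hx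
    simp only [Finset.Nat.mem_antidiagonalTuple, Fin.sum_univ_succ, Fin.cons_zero,
      Fin.cons_succ]
    rw [hx.2]
    exact hx.1
  · intro d _
    exact Fin.cons_self_tail d
  · rintro ⟨⟨a, b⟩, d⟩ hx
    simp only [Finset.mem_sigma, Finset.HasAntidiagonal.mem_antidiagonal,
      Finset.Nat.mem_antidiagonalTuple] at hx
    refine Sigma.ext ?_ ?_
    · simp only [Fin.cons_zero, Fin.tail_cons, hx.2]
    · simp only [Fin.tail_cons]
      exact heq_of_eq rfl
  · intro d _
    rw [Fin.prod_univ_succ]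
    simp [Fin.cons_zero, Fin.cons_succ, Fin.tail]

/-- Recurrence for complete homogeneous polynomials. -/
lemma hsymPoly_rec {m : ℕ} (β : Fin (m + 1) → R) (r : ℕ) :
    hsymPoly β (r + 1) = hsymPoly (Fin.tail β) (r + 1) + β 0 * hsymPoly β r := by
  rw [hsymPoly_head β (r + 1), Finset.Nat.sum_antidiagonal_succ, pow_zero, one_mul,
    hsymPoly_head β r, Finset.mul_sum]
  congr 1
  refine Finset.sum_congr rfl fun p _ => ?_
  rw [pow_succ]
  ring

end Aux

section PolyAux

variable {R : Type*} [CommRing R]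

open Polynomial

/-- The monic polynomial with roots `β`. -/
noncomputable def Pb {n : ℕ} (β : Fin n → R) : R[X] := ∏ i, (X - C (β i))

/-- Truncated generating polynomial of complete homogeneous polynomials. -/
noncomputable def Hb {n : ℕ} (β : Fin n → R) (N : ℕ) : R[X] :=
  ∑ r ∈ Finset.range (N + 1), C (hsymPoly β r) * X ^ (N - r)

/-- The remainder `X^(n+N) - Pb β * Hb β N`. -/
noncomputable def Tb {n : ℕ} (β : Fin n → R) (N : ℕ) : R[X] :=
  X ^ (n + N) - Pb β * Hb β N

lemma Hb_zero {n : ℕ} (β : Fin n → R) : Hb β 0 = 1 := by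
  simp [Hb, hsymPoly_zero]

lemma Hb_fin_zero (β : Fin 0 → R) (N : ℕ) : Hb β N = X ^ N := by
  unfold Hb
  rw [Finset.sum_range_succ']
  simp only [hsymPoly_fin_zero, map_zero, zero_mul, Finset.sum_const_zero, zero_add,
    hsymPoly_zero, map_one, one_mul, Nat.sub_zero]

lemma Hb_rec {n : ℕ} (β : Fin (n + 1) → R) (N : ℕ) :
    Hb β (N + 1) = Hb (Fin.tail β) (N + 1) + C (β 0) * Hb β N := by
  unfold Hb
  rw [Finset.sum_range_succ', Finset.sum_range_succ' (fun r => C (hsymPoly (Fin.tail β) r) * X ^ (N + 1 - r))]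
  simp only [hsymPoly_zero, map_one, one_mul, Nat.sub_zero, hsymPoly_rec β, map_add, map_mul]
  rw [Finset.mul_sum]
  have : ∀ i ∈ Finset.range (N + 1),
      (C (hsymPoly (Fin.tail β) (i + 1)) + C (β 0) * C (hsymPoly β i)) * X ^ (N + 1 - (i + 1)) =
        C (hsymPoly (Fin.tail β) (i + 1)) * X ^ (N + 1 - (i + 1)) +
          C (β 0) * (C (hsymPoly β i) * X ^ (N - i)) := by
    intro i _
    have : N + 1 - (i + 1) = N - i := by omega
    rw [this]; ring
  rw [Finset.sum_congr rfl this, Finset.sum_add_distrib]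
  ring

lemma Pb_head {n : ℕ} (β : Fin (n + 1) → R) :
    Pb β = (X - C (β 0)) * Pb (Fin.tail β) := by
  unfold Pb
  rw [Fin.prod_univ_succ]
  rfl

lemma Tb_fin_zero (β : Fin 0 → R) (N : ℕ) : Tb β N = 0 := by
  unfold Tb Pb
  rw [Hb_fin_zero]
  simp

lemma Tb_rec_zero {n : ℕ} (β : Fin (n + 1) → R) :
    Tb β 0 = (X - C (β 0)) * Tb (Fin.tail β) 0 + C (β 0) * X ^ n := by
  unfold Tb
  rw [Pb_head, Hb_zero, Hb_zero]
  ring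

lemma Tb_rec {n N : ℕ} (β : Fin (n + 1) → R) :
    Tb β (N + 1) = (X - C (β 0)) * Tb (Fin.tail β) (N + 1) + C (β 0) * Tb β N := by
  unfold Tb
  rw [Pb_head, Hb_rec]
  have h1 : n + 1 + (N + 1) = (n + (N + 1)) + 1 := by ring
  have h2 : n + 1 + N = (n + (N + 1)) := by ring
  rw [h1, h2, pow_succ]
  ring

lemma coeff_X_sub_C_mul (y : R) (p : R[X]) (u : ℕ) :
    ((X - C y) * p).coeff (u + 1) = p.coeff u - y * p.coeff (u + 1) := by
  rw [sub_mul, X_mul, Polynomial.coeff_sub, Polynomial.coeff_mul_X, Polynomial.coeff_C_mul]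

/-- The coefficients of `Tb β N` in degrees `≥ n` vanish. -/
lemma Tb_coeff_high : ∀ (n : ℕ) (N : ℕ) (β : Fin n → R) (u : ℕ), n ≤ u →
    (Tb β N).coeff u = 0 := by
  intro n
  induction n with
  | zero => intro N β u _; rw [Tb_fin_zero]; simp
  | succ n ih =>
    intro N
    induction N with
    | zero =>
      intro β u hu
      obtain ⟨v, rfl⟩ : ∃ v, u = v + 1 := ⟨n + (u - (n + 1)), by omega⟩
      rw [Tb_rec_zero, Polynomial.coeff_add, _root_.coeff_X_sub_C_mul,
        ih 0 _ v (by omega), ih 0 _ (v + 1) (by omega), Polynomial.coeff_C_mul,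
        Polynomial.coeff_X_pow, if_neg (by omega)]
      ring
    | succ N ihN =>
      intro β u hu
      obtain ⟨v, rfl⟩ : ∃ v, u = v + 1 := ⟨n + (u - (n + 1)), by omega⟩
      rw [Tb_rec, Polynomial.coeff_add, _root_.coeff_X_sub_C_mul,
        ih (N + 1) _ v (by omega), ih (N + 1) _ (v + 1) (by omega), Polynomial.coeff_C_mul,
        ihN _ (v + 1) (by omega)]
      ring

/-- The coefficient of `Tb β N` in degree `n - 1` is `h_{N+1}(β)`. -/
lemma Tb_coeff_top : ∀ (n : ℕ) (N : ℕ) (β : Fin n → R),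
    (Tb β N).coeff (n - 1) = hsymPoly β (N + 1) := by
  intro n
  induction n with
  | zero =>
    intro N β
    rw [Tb_fin_zero, hsymPoly_fin_zero]
    simp
  | succ n ih =>
    intro N
    induction N with
    | zero =>
      intro β
      have hn : n + 1 - 1 = n := rfl
      rw [hn, Tb_rec_zero, Polynomial.coeff_add, Polynomial.coeff_C_mul,
        Polynomial.coeff_X_pow, if_pos rfl, mul_one]
      have hc : ((X - C (β 0)) * Tb (Fin.tail β) 0).coeff n =
          (Tb (Fin.tail β) 0).coeff (n - 1) - β 0 * (Tb (Fin.tail β) 0).coeff n := by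
        rcases n with _ | v
        · simp [Tb_fin_zero]
        · exact coeff_X_sub_C_mul _ _ v
      rw [hc, ih 0, Tb_coeff_high n 0 _ n le_rfl, hsymPoly_rec β 0, hsymPoly_zero]
      ring
    | succ N ihN =>
      intro β
      have hn : n + 1 - 1 = n := rfl
      rw [hn] at ihN ⊢
      rw [Tb_rec, Polynomial.coeff_add, Polynomial.coeff_C_mul, ihN]
      have hc : ((X - C (β 0)) * Tb (Fin.tail β) (N + 1)).coeff n =
          (Tb (Fin.tail β) (N + 1)).coeff (n - 1) -
            β 0 * (Tb (Fin.tail β) (N + 1)).coeff n := by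
        rcases n with _ | v
        · simp [Tb_fin_zero]
        · exact coeff_X_sub_C_mul _ _ v
      rw [hc, ih (N + 1), Tb_coeff_high n (N + 1) _ n le_rfl, hsymPoly_rec β (N + 1)]
      ring

lemma Tb_natDegree_lt {n : ℕ} (β : Fin (n + 1) → R) (N : ℕ) :
    (Tb β N).natDegree < n + 1 := by
  by_cases h : Tb β N = 0
  · rw [h]; simp
  · rw [Polynomial.natDegree_lt_iff_degree_lt h]
    exact (Polynomial.degree_lt_iff_coeff_zero _ _).mpr
      (fun m hm => Tb_coeff_high (n + 1) N β m (by exact_mod_cast hm))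

/-- The key evaluation: `β j ^ (n + 1 + N)` is a fixed linear combination of lower powers. -/
lemma pow_eq_sum {n : ℕ} (β : Fin (n + 1) → R) (N : ℕ) (j : Fin (n + 1)) :
    β j ^ (n + 1 + N) = ∑ t ∈ Finset.range (n + 1), (Tb β N).coeff t * β j ^ t := by
  have heval : (Tb β N).eval (β j) = β j ^ (n + 1 + N) := by
    unfold Tb Pb
    rw [Polynomial.eval_sub, Polynomial.eval_mul, Polynomial.eval_pow, Polynomial.eval_X,
      Polynomial.eval_prod]
    rw [Finset.prod_eq_zero (Finset.mem_univ j) (by simp)]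
    ring
  rw [← heval, Polynomial.eval_eq_sum_range' (Tb_natDegree_lt β N)]

end PolyAux

/-- Generalized Vandermonde determinant: the `(k-2) × (k-2)` matrix whose first `k-3` rows are
the power rows `β_j^0, …, β_j^{k-4}` and whose last row is `β_j^{k+2}` has determinant
`h₅(β) · ∏_{i < j} (β_j - β_i)`. -/
theorem det_genVandermonde_h5 {R : Type*} [CommRing R] (k : ℕ) (hk : 3 ≤ k)
    (β : Fin (k - 2) → R) :
    Matrix.det (Matrix.of fun i j : Fin (k - 2) =>
        if (i : ℕ) < k - 3 then β j ^ (i : ℕ) else β j ^ (k + 2)) =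
      hsymPoly β 5 * ∏ i : Fin (k - 2), ∏ j ∈ Finset.Ioi i, (β j - β i) := by
  obtain ⟨m, rfl⟩ : ∃ m, k = m + 3 := ⟨k - 3, by omega⟩
  suffices h : ∀ γ : Fin (m + 1) → R, Matrix.det (Matrix.of fun i j : Fin (m + 1) =>
        if (i : ℕ) < m then γ j ^ (i : ℕ) else γ j ^ (m + 1 + 4)) =
      hsymPoly γ 5 * ∏ i : Fin (m + 1), ∏ j ∈ Finset.Ioi i, (γ j - γ i) by
    exact h β
  intro β
  -- the matrix equals the vandermonde matrix with last row updated
  have hM : (Matrix.of fun i j : Fin (m + 1) =>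
        if (i : ℕ) < m then β j ^ (i : ℕ) else β j ^ (m + 1 + 4)) =
      ((Matrix.vandermonde β).updateCol (Fin.last m)
        (fun kk => ∑ t : Fin (m + 1), (Tb β 4).coeff (t : ℕ) • Matrix.vandermonde β kk t)).transpose := by
    ext i j
    rw [Matrix.transpose_apply, Matrix.of_apply, Matrix.updateCol_apply]
    by_cases hi : (i : ℕ) < m
    · have hne : i ≠ Fin.last m := by
        intro h; rw [h] at hi; simp at hi
      rw [if_pos hi, if_neg hne, Matrix.vandermonde_apply]
    · have heq : i = Fin.last m := Fin.ext (by
        rw [Fin.val_last]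
        have := i.isLt; omega)
      rw [if_neg hi, if_pos heq]
      simp only [Matrix.vandermonde_apply, smul_eq_mul]
      rw [pow_eq_sum β 4 j,
        ← Fin.sum_univ_eq_sum_range (fun t => (Tb β 4).coeff t * β j ^ t)]
  rw [hM, Matrix.det_transpose, Matrix.det_updateCol_sum, Matrix.det_vandermonde,
    smul_eq_mul]
  congr 1
  have hlast : ((Fin.last m : Fin (m + 1)) : ℕ) = (m + 1) - 1 := rfl
  rw [hlast, Tb_coeff_top (m + 1) 4 β]
end
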